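/- arXiv:2604.05511 — 5 statements merged into one kernel-verified Lean document; each statement's English description precedes it below -/
import Mathlib

section
/- Let q1, q2, r be real numbers with q1 > 0, r > 0 and q2 ≥ 0. There exist T0 > 0, C > 0 and μ > 0, depending only on q1, q2, r, such that for every T ≥ T0 and every four times continuously differentiable function y : ℝ → ℝ satisfying r·y''''(t) − q2·y''(t) + q1·y(t) = 0 for all t ∈ [0,T] and the boundary bounds |y(0)| ≤ 1, |y'(0)| ≤ 1, |y(T)| ≤ 1, |y'(T)| ≤ 1, one has |y(t)| + |y'(t)| + |y''(t)| ≤ C·( e^{−μ·t} + e^{−μ·(T−t)} ) for all t ∈ [0,T]. -/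
open Real Set

lemma quad_nonneg (P Q R x y : ℝ) (hP : 0 < P) (hD : Q^2 ≤ 4*P*R) :
    0 ≤ P*x^2 + Q*(x*y) + R*y^2 := by
  nlinarith [sq_nonneg (2*P*x + Q*y), sq_nonneg y, mul_nonneg (sub_nonneg.2 hD) (sq_nonneg y)]

set_option maxHeartbeats 1000000 in
lemma decay2 {b c : ℝ} (hb : 0 < b) (hc : 0 < c) :
    ∃ K ≥ (1:ℝ), ∃ σ > (0:ℝ), ∀ T : ℝ, ∀ w : ℝ → ℝ, ContDiff ℝ 2 w →
      (∀ t ∈ Icc (0:ℝ) T, iteratedDeriv 2 w t + b * deriv w t + c * w t = 0) →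
      ∀ t ∈ Icc (0:ℝ) T, |w t| + |deriv w t| ≤ K * ((|w 0| + |deriv w 0|) * exp (-σ * t)) := by
  obtain ⟨ε, hε, hε2c, hεb, hεbc⟩ :
      ∃ ε : ℝ, 0 < ε ∧ ε^2 ≤ c ∧ ε ≤ 2*b/3 ∧ ε*b ≤ 2*c := by
    refine ⟨min (Real.sqrt c) (min (2*b/3) (2*c/b)), ?_, ?_, ?_, ?_⟩
    · exact lt_min (Real.sqrt_pos.2 hc) (lt_min (by positivity) (by positivity))
    · have h1 : min (Real.sqrt c) (min (2*b/3) (2*c/b)) ≤ Real.sqrt c := min_le_left _ _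
      have h2 : 0 < min (Real.sqrt c) (min (2*b/3) (2*c/b)) :=
        lt_min (Real.sqrt_pos.2 hc) (lt_min (by positivity) (by positivity))
      nlinarith [Real.sq_sqrt hc.le, Real.sqrt_nonneg c]
    · exact le_trans (min_le_right _ _) (min_le_left _ _)
    · have h1 : min (Real.sqrt c) (min (2*b/3) (2*c/b)) ≤ 2*c/b :=
        le_trans (min_le_right _ _) (min_le_right _ _)
      exact (le_div_iff₀ hb).1 h1
  obtain ⟨M, hM1, hMc⟩ : ∃ M : ℝ, 1 ≤ M ∧ c ≤ M := ⟨max c 1, le_max_right _ _, le_max_left _ _⟩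
  have hM0 : 0 < M := by linarith
  obtain ⟨K, hK1, hK2⟩ : ∃ K : ℝ, 1 ≤ K ∧ 6*M^2 ≤ c*K^2 := by
    refine ⟨max 1 (Real.sqrt (6*M^2/c)), le_max_left _ _, ?_⟩
    have hX : (0:ℝ) ≤ 6*M^2/c := by positivity
    have h := Real.sq_sqrt hX
    have h2 : Real.sqrt (6*M^2/c) ≤ max 1 (Real.sqrt (6*M^2/c)) := le_max_right _ _
    have h3 : Real.sqrt (6*M^2/c) ^ 2 ≤ (max 1 (Real.sqrt (6*M^2/c))) ^ 2 := by
      nlinarith [Real.sqrt_nonneg (6*M^2/c)]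
    rw [h, div_le_iff₀ hc] at h3
    linarith
  refine ⟨K, hK1, ε/4, by positivity, ?_⟩
  intro T w hw hode t ht
  have hw1 : Differentiable ℝ w := hw.differentiable (by norm_num)
  have hdw : ContDiff ℝ 1 (deriv w) := by
    have h := ContDiff.iterate_deriv' 1 1 (f := w) (by exact_mod_cast hw)
    simpa using h
  have hw2 : Differentiable ℝ (deriv w) := hdw.differentiable (by norm_num)
  have hid2 : iteratedDeriv 2 w = deriv (deriv w) := by
    rw [show (2:ℕ) = 1 + 1 from rfl, iteratedDeriv_succ, iteratedDeriv_one]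
  have hEdiff : Differentiable ℝ (fun s => c * (w s)^2 + ε * (w s * deriv w s) + (deriv w s)^2) :=
    (((hw1.pow 2).const_mul c).add ((hw1.mul hw2).const_mul ε)).add (hw2.pow 2)
  have hGdiff : Differentiable ℝ
      (fun s => (c * (w s)^2 + ε * (w s * deriv w s) + (deriv w s)^2) * exp (ε/2 * s)) :=
    hEdiff.mul (by fun_prop)
  have hanti : AntitoneOn
      (fun s => (c * (w s)^2 + ε * (w s * deriv w s) + (deriv w s)^2) * exp (ε/2 * s))
      (Icc 0 T) := by
    apply antitoneOn_of_deriv_nonpos (convex_Icc _ _) hGdiff.continuous.continuousOn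
      hGdiff.differentiableOn
    intro x hx
    rw [interior_Icc] at hx
    have hode' := hode x (Ioo_subset_Icc_self hx)
    rw [hid2] at hode'
    have hDw : HasDerivAt w (deriv w x) x := hw1.differentiableAt.hasDerivAt
    have hDw2 : HasDerivAt (deriv w) (deriv (deriv w) x) x := hw2.differentiableAt.hasDerivAt
    set W := w x with hWdef; set W' := deriv w x with hW'def; set W'' := deriv (deriv w) x with hW''def
    have hDE : HasDerivAt (fun s => c * (w s)^2 + ε * (w s * deriv w s) + (deriv w s)^2)
        (c * (2 * W * W') + ε * (W' * W' + W * W'') + 2 * W' * W'') x := by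
      have h1 : HasDerivAt (fun s => c * (w s)^2) (c * (2 * W * W')) x := by
        simpa [mul_comm] using ((hDw.pow 2).const_mul c)
      have h2 : HasDerivAt (fun s => ε * (w s * deriv w s)) (ε * (W' * W' + W * W'')) x := by
        exact (hDw.mul hDw2).const_mul ε
      have h3 : HasDerivAt (fun s => (deriv w s)^2) (2 * W' * W'') x := by
        simpa [mul_comm] using (hDw2.fun_pow 2)
      simpa using (h1.fun_add h2).fun_add h3
    have hDexp : HasDerivAt (fun s => exp (ε/2 * s)) (ε/2 * exp (ε/2 * x)) x := by
      simpa [mul_comm] using (((hasDerivAt_id x).const_mul (ε/2)).exp)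
    have hDG : HasDerivAt
        (fun s => (c * (w s)^2 + ε * (w s * deriv w s) + (deriv w s)^2) * exp (ε/2 * s))
        ((c * (2 * W * W') + ε * (W' * W' + W * W'') + 2 * W' * W'') * exp (ε/2 * x)
          + (c * W^2 + ε * (W * W') + W'^2) * (ε/2 * exp (ε/2 * x))) x := hDE.mul hDexp
    rw [hDG.deriv]
    have hW'' : W'' = -(b * W') - c * W := by linarith
    have hquad : 0 ≤ (ε*c/2) * W^2 + (ε*(b - ε/2)) * (W * W') + (2*b - 3*ε/2) * W'^2 := by
      apply quad_nonneg _ _ _ _ _ (by positivity)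
      have hbε : ε/2 ≤ b := by linarith
      have l0 : 0 ≤ ε*(b - ε/2) := by nlinarith
      have l1 : (ε*(b - ε/2))^2 ≤ (ε*b)^2 := by nlinarith [hε.le]
      have l2 : (ε*b)^2 ≤ 2*c*(ε*b) := by nlinarith [hεbc, mul_nonneg hε.le hb.le]
      have l3 : 2*c*(ε*b) ≤ 4*(ε*c/2)*(2*b - 3*ε/2) := by nlinarith [hεb, mul_pos hε hc]
      linarith
    have key : (c * (2 * W * W') + ε * (W' * W' + W * W'') + 2 * W' * W'')
        + (ε/2) * (c * W^2 + ε * (W * W') + W'^2) ≤ 0 := by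
      rw [hW'']; nlinarith [hquad]
    have hexp : 0 < exp (ε/2 * x) := exp_pos _
    nlinarith [key, hexp]
  have h0T : (0:ℝ) ∈ Icc (0:ℝ) T := ⟨le_refl _, le_trans ht.1 ht.2⟩
  have hGle : (c * (w t)^2 + ε * (w t * deriv w t) + (deriv w t)^2) * exp (ε/2 * t)
      ≤ (c * (w 0)^2 + ε * (w 0 * deriv w 0) + (deriv w 0)^2) := by
    have h := hanti h0T ht ht.1
    simpa using h
  have hEtexp : c * (w t)^2 + ε * (w t * deriv w t) + (deriv w t)^2
      ≤ (c * (w 0)^2 + ε * (w 0 * deriv w 0) + (deriv w 0)^2) * exp (-(ε/2*t)) := by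
    have h := mul_le_mul_of_nonneg_right hGle (exp_pos (-(ε/2*t))).le
    rwa [mul_assoc, ← Real.exp_add, show ε/2*t + -(ε/2*t) = 0 by ring, Real.exp_zero, mul_one] at h
  have hlow : (c/2) * (w t)^2 + (1/2) * (deriv w t)^2
      ≤ c * (w t)^2 + ε * (w t * deriv w t) + (deriv w t)^2 := by
    nlinarith only [sq_nonneg (ε * w t + deriv w t), hε2c, sq_nonneg (w t)]
  have hup : c * (w 0)^2 + ε * (w 0 * deriv w 0) + (deriv w 0)^2
      ≤ (3/2) * M * (|w 0| + |deriv w 0|)^2 := by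
    nlinarith only [sq_abs (w 0), sq_abs (deriv w 0), abs_nonneg (w 0), abs_nonneg (deriv w 0),
      hε2c, sq_nonneg (ε * w 0 - deriv w 0), sq_nonneg (w 0), hMc, hM1, hc.le,
      mul_nonneg (abs_nonneg (w 0)) (abs_nonneg (deriv w 0))]
  have h3 : c * (|w t| + |deriv w t|)^2
      ≤ 4*M * (c * (w t)^2 + ε * (w t * deriv w t) + (deriv w t)^2) := by
    have e1 : c * |w t|^2 = c * (w t)^2 := by rw [sq_abs]
    have e2 : c * |deriv w t|^2 = c * (deriv w t)^2 := by rw [sq_abs]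
    nlinarith only [mul_le_mul_of_nonneg_left hlow (by positivity : (0:ℝ) ≤ 4*M),
      e1, e2,
      mul_nonneg (mul_nonneg (sub_nonneg.2 hM1) hc.le) (sq_nonneg (w t)),
      mul_nonneg (sub_nonneg.2 hMc) (sq_nonneg (deriv w t)),
      mul_nonneg hc.le (sq_nonneg (|w t| - |deriv w t|))]
  have h4 : c * (w t)^2 + ε * (w t * deriv w t) + (deriv w t)^2
      ≤ (3/2) * M * (|w 0| + |deriv w 0|)^2 * exp (-(ε/2*t)) :=
    le_trans hEtexp (mul_le_mul_of_nonneg_right hup (exp_pos _).le)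
  have h5 : c * (|w t| + |deriv w t|)^2
      ≤ 6*M^2*(|w 0| + |deriv w 0|)^2*exp (-(ε/2*t)) := by
    nlinarith only [mul_le_mul_of_nonneg_left h4 (by positivity : (0:ℝ) ≤ 4*M), h3]
  have h6 : c * (|w t| + |deriv w t|)^2
      ≤ c * (K^2 * ((|w 0| + |deriv w 0|)^2 * exp (-(ε/2*t)))) := by
    refine le_trans h5 ?_
    have h := mul_le_mul_of_nonneg_right hK2
      (mul_nonneg (sq_nonneg (|w 0| + |deriv w 0|)) (exp_pos (-(ε/2*t))).le)
    nlinarith only [h]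
  have h7 : (|w t| + |deriv w t|)^2 ≤ K^2 * ((|w 0| + |deriv w 0|)^2 * exp (-(ε/2*t))) :=
    le_of_mul_le_mul_left h6 hc
  have hexp2 : Real.exp (-(ε/4)*t) ^ 2 = Real.exp (-(ε/2*t)) := by
    rw [sq, ← Real.exp_add]; ring_nf
  have h8 : (|w t| + |deriv w t|)^2 ≤ (K * ((|w 0| + |deriv w 0|) * exp (-(ε/4)*t)))^2 := by
    rw [mul_pow, mul_pow, hexp2]; exact h7
  have h9 := Real.sqrt_le_sqrt h8
  rwa [Real.sqrt_sq (by positivity), Real.sqrt_sq (by positivity)] at h9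

set_option maxHeartbeats 1000000 in
lemma decay_both {b c : ℝ} (hb : 0 < b) (hc : 0 < c) :
    ∃ K ≥ (1:ℝ), ∃ σ > (0:ℝ),
      (∀ T : ℝ, ∀ w : ℝ → ℝ, ContDiff ℝ 2 w →
        (∀ t ∈ Icc (0:ℝ) T, iteratedDeriv 2 w t + b * deriv w t + c * w t = 0) →
        ∀ t ∈ Icc (0:ℝ) T, |w t| + |deriv w t| ≤ K * ((|w 0| + |deriv w 0|) * exp (-σ * t))) ∧
      (∀ T : ℝ, ∀ w : ℝ → ℝ, ContDiff ℝ 2 w →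
        (∀ t ∈ Icc (0:ℝ) T, iteratedDeriv 2 w t - b * deriv w t + c * w t = 0) →
        ∀ t ∈ Icc (0:ℝ) T, |w t| + |deriv w t| ≤ K * ((|w T| + |deriv w T|) * exp (-σ * (T - t)))) := by
  obtain ⟨K, hK1, σ, hσ, hdec⟩ := decay2 hb hc
  refine ⟨K, hK1, σ, hσ, hdec, ?_⟩
  intro T w hw hode t ht
  have hw1 : Differentiable ℝ w := hw.differentiable (by norm_num)
  have hdw : ContDiff ℝ 1 (deriv w) := by
    have h := ContDiff.iterate_deriv' 1 1 (f := w) (by exact_mod_cast hw)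
    simpa using h
  have hw2 : Differentiable ℝ (deriv w) := hdw.differentiable (by norm_num)
  have hid2 : iteratedDeriv 2 w = deriv (deriv w) := by
    rw [show (2:ℕ) = 1 + 1 from rfl, iteratedDeriv_succ, iteratedDeriv_one]
  set z : ℝ → ℝ := fun s => w (T - s) with hz_def
  have hinner : ∀ s : ℝ, HasDerivAt (fun x : ℝ => T - x) (-1) s := fun s => by
    simpa using (hasDerivAt_id s).const_sub T
  have hz : ContDiff ℝ 2 z := hw.comp (contDiff_const.sub contDiff_id)
  have hdz : ∀ s, HasDerivAt z (-(deriv w (T - s))) s := by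
    intro s
    have h := (hw1.differentiableAt.hasDerivAt (x := T - s)).comp s (hinner s)
    simpa [hz_def, Function.comp_def] using h.congr_deriv (by ring)
  have hdz' : deriv z = fun s => -(deriv w (T - s)) := funext fun s => (hdz s).deriv
  have hdz2 : ∀ s, iteratedDeriv 2 z s = iteratedDeriv 2 w (T - s) := by
    intro s
    have h2 : HasDerivAt (fun x => -(deriv w (T - x))) (deriv (deriv w) (T - s)) s := by
      have h := ((hw2.differentiableAt.hasDerivAt (x := T - s)).comp s (hinner s)).fun_neg
      simpa [Function.comp_def] using h.congr_deriv (by ring)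
    have : iteratedDeriv 2 z = deriv (deriv z) := by
      rw [show (2:ℕ) = 1 + 1 from rfl, iteratedDeriv_succ, iteratedDeriv_one]
    rw [this, hdz', h2.deriv, hid2]
  have hodez : ∀ s ∈ Icc (0:ℝ) T, iteratedDeriv 2 z s + b * deriv z s + c * z s = 0 := by
    intro s hs
    have hm : T - s ∈ Icc (0:ℝ) T := ⟨by linarith [hs.2], by linarith [hs.1]⟩
    have h := hode (T - s) hm
    rw [hdz2 s, hdz']
    simp only [hz_def]
    linarith [h]
  have hmem : T - t ∈ Icc (0:ℝ) T := ⟨by linarith [ht.2], by linarith [ht.1]⟩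
  have h := hdec T z hz hodez (T - t) hmem
  have e1 : z (T - t) = w t := by simp [hz_def]
  have e2 : z 0 = w T := by simp [hz_def]
  rw [e1, e2, hdz'] at h
  simpa using h

set_option maxHeartbeats 2000000 in
/-- exponential turnpike estimate for stationary trajectories of the
double-integrator LQ problem in the regular case: any `C⁴` solution of
`r·y'''' − q2·y'' + q1·y = 0` on `[0,T]` with boundary data bounded by `1` satisfies
`|y(t)| + |y'(t)| + |y''(t)| ≤ C·(e^{−μt} + e^{−μ(T−t)})` on `[0,T]`, uniformly in `T ≥ T0`. -/
theorem stmt3 (q1 q2 r : ℝ) (hq1 : 0 < q1) (hr : 0 < r) (hq2 : 0 ≤ q2) :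
    ∃ T0 > (0:ℝ), ∃ C > (0:ℝ), ∃ μ > (0:ℝ), ∀ T ≥ T0, ∀ y : ℝ → ℝ,
      ContDiff ℝ 4 y →
      (∀ t ∈ Set.Icc (0:ℝ) T,
        r * iteratedDeriv 4 y t - q2 * iteratedDeriv 2 y t + q1 * y t = 0) →
      |y 0| ≤ 1 → |deriv y 0| ≤ 1 → |y T| ≤ 1 → |deriv y T| ≤ 1 →
      ∀ t ∈ Set.Icc (0:ℝ) T,
        |y t| + |deriv y t| + |iteratedDeriv 2 y t|
          ≤ C * (Real.exp (-μ * t) + Real.exp (-μ * (T - t))) := by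
  obtain ⟨c, hc, hc2⟩ : ∃ c : ℝ, 0 < c ∧ c^2 = q1/r :=
    ⟨Real.sqrt (q1/r), Real.sqrt_pos.2 (div_pos hq1 hr), Real.sq_sqrt (div_pos hq1 hr).le⟩
  obtain ⟨b, hb, hb2⟩ : ∃ b : ℝ, 0 < b ∧ b^2 = 2*c + q2/r :=
    ⟨Real.sqrt (2*c + q2/r), Real.sqrt_pos.2 (by positivity), Real.sq_sqrt (by positivity)⟩
  have hrc : r * c^2 = q1 := by rw [hc2]; field_simp
  have hrb : r * b^2 = 2*r*c + q2 := by rw [hb2]; field_simp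
  obtain ⟨K, hK1, σ, hσ, hF, hB⟩ := decay_both hb hc
  have hK0 : 0 < K := lt_of_lt_of_le one_pos hK1
  obtain ⟨C₁, hC₁def⟩ : ∃ x : ℝ, x = 1 + 3*b + 2*b^2 + 2*b*c := ⟨_, rfl⟩
  have hC₁ : 1 ≤ C₁ := by rw [hC₁def]; nlinarith
  have hC₁0 : 0 < C₁ := by linarith
  obtain ⟨C, hCpos, hCge⟩ : ∃ C : ℝ, 0 < C ∧ (2*b+2+4*c)*(2*K*C₁) ≤ 4*b*c*C := by
    refine ⟨((2*b+2+4*c)*(2*K*C₁))/(4*b*c) + 1, by positivity, ?_⟩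
    have h4bc : (0:ℝ) < 4*b*c := by positivity
    rw [mul_add, mul_one, mul_div_cancel₀ _ h4bc.ne']
    linarith
  refine ⟨max 1 (Real.log (2*C₁*K)/σ), lt_of_lt_of_le one_pos (le_max_left _ _),
    C, hCpos, σ, hσ, ?_⟩
  intro T hT y hy hode hy0 hy'0 hyT hy'T t ht
  have hT1 : (1:ℝ) ≤ T := le_trans (le_max_left _ _) hT
  have hT0 : (0:ℝ) ≤ T := by linarith
  have h23 : (2:WithTop ℕ∞) ≤ 3 := by norm_num
  have h24 : (2:WithTop ℕ∞) ≤ 4 := by norm_num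
  -- smoothness bookkeeping
  have hd1 : ContDiff ℝ 3 (deriv y) := by
    have h := ContDiff.iterate_deriv' 3 1 (f := y) (by exact_mod_cast hy)
    simpa using h
  have hd2 : ContDiff ℝ 2 (deriv (deriv y)) := by
    have h := ContDiff.iterate_deriv' 2 2 (f := y) (by exact_mod_cast hy)
    simpa [Function.iterate_succ, Function.comp] using h
  have hd3 : ContDiff ℝ 1 (deriv (deriv (deriv y))) := by
    have h := ContDiff.iterate_deriv' 1 3 (f := y) (by exact_mod_cast hy)
    simpa [Function.iterate_succ, Function.comp] using h
  have hy_d : Differentiable ℝ y := hy.differentiable (by norm_num)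
  have hd1_d : Differentiable ℝ (deriv y) := hd1.differentiable (by norm_num)
  have hd2_d : Differentiable ℝ (deriv (deriv y)) := hd2.differentiable (by norm_num)
  have hd3_d : Differentiable ℝ (deriv (deriv (deriv y))) := hd3.differentiable (by norm_num)
  have hi2 : iteratedDeriv 2 y = deriv (deriv y) := by
    rw [show (2:ℕ) = 1 + 1 from rfl, iteratedDeriv_succ, iteratedDeriv_one]
  have hi4 : iteratedDeriv 4 y = deriv (deriv (deriv (deriv y))) := by
    rw [show (4:ℕ) = 1 + 1 + 1 + 1 from rfl, iteratedDeriv_succ, iteratedDeriv_succ,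
      iteratedDeriv_succ, iteratedDeriv_one]
  -- the two factor functions
  set u : ℝ → ℝ := fun s => deriv (deriv y) s - b * deriv y s + c * y s with hu_def
  set v : ℝ → ℝ := fun s => deriv (deriv y) s + b * deriv y s + c * y s with hv_def
  have hu2 : ContDiff ℝ 2 u :=
    (hd2.sub (contDiff_const.mul (hd1.of_le h23))).add (contDiff_const.mul (hy.of_le h24))
  have hv2 : ContDiff ℝ 2 v :=
    (hd2.add (contDiff_const.mul (hd1.of_le h23))).add (contDiff_const.mul (hy.of_le h24))
  -- deriv of u, v
  have hDu : ∀ s, HasDerivAt u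
      (deriv (deriv (deriv y)) s - b * deriv (deriv y) s + c * deriv y s) s := by
    intro s
    exact ((hd2_d.differentiableAt.hasDerivAt).sub
      ((hd1_d.differentiableAt.hasDerivAt).const_mul b)).add
      ((hy_d.differentiableAt.hasDerivAt).const_mul c)
  have hDv : ∀ s, HasDerivAt v
      (deriv (deriv (deriv y)) s + b * deriv (deriv y) s + c * deriv y s) s := by
    intro s
    exact ((hd2_d.differentiableAt.hasDerivAt).add
      ((hd1_d.differentiableAt.hasDerivAt).const_mul b)).add
      ((hy_d.differentiableAt.hasDerivAt).const_mul c)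
  have hdu : deriv u = fun s => deriv (deriv (deriv y)) s - b * deriv (deriv y) s + c * deriv y s :=
    funext fun s => (hDu s).deriv
  have hdv : deriv v = fun s => deriv (deriv (deriv y)) s + b * deriv (deriv y) s + c * deriv y s :=
    funext fun s => (hDv s).deriv
  have hi2u : ∀ s, iteratedDeriv 2 u s
      = deriv (deriv (deriv (deriv y))) s - b * deriv (deriv (deriv y)) s + c * deriv (deriv y) s := by
    intro s
    have h : HasDerivAt (fun s => deriv (deriv (deriv y)) s - b * deriv (deriv y) s + c * deriv y s)
        (deriv (deriv (deriv (deriv y))) s - b * deriv (deriv (deriv y)) s + c * deriv (deriv y) s) s :=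
      ((hd3_d.differentiableAt.hasDerivAt).sub
        ((hd2_d.differentiableAt.hasDerivAt).const_mul b)).add
        ((hd1_d.differentiableAt.hasDerivAt).const_mul c)
    rw [show (2:ℕ) = 1 + 1 from rfl, iteratedDeriv_succ, iteratedDeriv_one, hdu, h.deriv]
  have hi2v : ∀ s, iteratedDeriv 2 v s
      = deriv (deriv (deriv (deriv y))) s + b * deriv (deriv (deriv y)) s + c * deriv (deriv y) s := by
    intro s
    have h : HasDerivAt (fun s => deriv (deriv (deriv y)) s + b * deriv (deriv y) s + c * deriv y s)
        (deriv (deriv (deriv (deriv y))) s + b * deriv (deriv (deriv y)) s + c * deriv (deriv y) s) s :=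
      ((hd3_d.differentiableAt.hasDerivAt).add
        ((hd2_d.differentiableAt.hasDerivAt).const_mul b)).add
        ((hd1_d.differentiableAt.hasDerivAt).const_mul c)
    rw [show (2:ℕ) = 1 + 1 from rfl, iteratedDeriv_succ, iteratedDeriv_one, hdv, h.deriv]
  -- the factored ODEs
  have hkey : ∀ s ∈ Icc (0:ℝ) T, (deriv (deriv (deriv (deriv y))) s)
      + (2*c - b^2) * (deriv (deriv y) s) + c^2 * (y s) = 0 := by
    intro s hs
    have h := hode s hs
    rw [hi2, hi4] at h
    have h2 : r * ((deriv (deriv (deriv (deriv y))) s)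
        + (2*c - b^2) * (deriv (deriv y) s) + c^2 * (y s)) = 0 := by
      linear_combination h - (deriv (deriv y) s) * hrb + (y s) * hrc
    rcases mul_eq_zero.mp h2 with h' | h'
    · exact absurd h' hr.ne'
    · exact h'
  have hodeu : ∀ s ∈ Icc (0:ℝ) T, iteratedDeriv 2 u s + b * deriv u s + c * u s = 0 := by
    intro s hs
    rw [hi2u s, hdu]
    simp only [hu_def]
    linear_combination hkey s hs
  have hodev : ∀ s ∈ Icc (0:ℝ) T, iteratedDeriv 2 v s - b * deriv v s + c * v s = 0 := by
    intro s hs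
    rw [hi2v s, hdv]
    simp only [hv_def]
    linear_combination hkey s hs
  have hu_bd := hF T u hu2 hodeu
  have hv_bd := hB T v hv2 hodev
  have h0mem : (0:ℝ) ∈ Icc (0:ℝ) T := ⟨le_refl _, hT0⟩
  have hTmem : T ∈ Icc (0:ℝ) T := ⟨hT0, le_refl _⟩
  have habs2b : ∀ z : ℝ, |2*b*z| = 2*b*|z| := by
    intro z; rw [abs_mul, abs_of_pos (by positivity : (0:ℝ) < 2*b)]
  -- boundary coupling
  have hXc : |u 0| + |deriv u 0| ≤ C₁ * ((|v 0| + |deriv v 0|) + 1) := by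
    have e1 : u 0 = v 0 - 2*b*(deriv y 0) := by simp only [hu_def, hv_def]; ring
    have e2 : deriv u 0 = deriv v 0 - b*(u 0 + v 0) + 2*b*c*(y 0) := by
      rw [hdu, hdv]; simp only [hu_def, hv_def]; ring
    have l1 : |u 0| ≤ |v 0| + 2*b := by
      rw [e1]
      refine (abs_sub _ _).trans ?_
      rw [habs2b]
      nlinarith only [abs_nonneg (v 0), hy'0, hb.le]
    have l2 : |deriv u 0| ≤ |deriv v 0| + b*(|u 0| + |v 0|) + 2*b*c := by
      rw [e2]
      refine (abs_add_le _ _).trans ?_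
      have t1 : |deriv v 0 - b*(u 0 + v 0)| ≤ |deriv v 0| + b*(|u 0| + |v 0|) := by
        refine (abs_sub _ _).trans ?_
        rw [abs_mul, abs_of_pos hb]
        have h := abs_add_le (u 0) (v 0)
        nlinarith only [h, hb.le]
      have t2 : |2*b*c*(y 0)| ≤ 2*b*c := by
        rw [abs_mul, abs_of_pos (by positivity : (0:ℝ) < 2*b*c)]
        have := mul_le_mul_of_nonneg_left hy0 (by positivity : (0:ℝ) ≤ 2*b*c)
        linarith
      linarith
    rw [hC₁def]
    nlinarith only [abs_nonneg (v 0), abs_nonneg (deriv v 0), hb.le, hc.le, l1, l2,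
      mul_nonneg hb.le (abs_nonneg (v 0)), mul_nonneg hb.le (abs_nonneg (deriv v 0)),
      mul_nonneg (mul_nonneg hb.le hb.le) (abs_nonneg (v 0)),
      mul_nonneg (mul_nonneg hb.le hc.le) (abs_nonneg (v 0))]
  have hYc : |v T| + |deriv v T| ≤ C₁ * ((|u T| + |deriv u T|) + 1) := by
    have e1 : v T = u T + 2*b*(deriv y T) := by simp only [hu_def, hv_def]; ring
    have e2 : deriv v T = deriv u T + b*(u T + v T) - 2*b*c*(y T) := by
      rw [hdu, hdv]; simp only [hu_def, hv_def]; ring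
    have l1 : |v T| ≤ |u T| + 2*b := by
      rw [e1]
      refine (abs_add_le _ _).trans ?_
      rw [habs2b]
      nlinarith only [abs_nonneg (u T), hy'T, hb.le]
    have l2 : |deriv v T| ≤ |deriv u T| + b*(|u T| + |v T|) + 2*b*c := by
      rw [e2]
      refine (abs_sub _ _).trans ?_
      have t1 : |deriv u T + b*(u T + v T)| ≤ |deriv u T| + b*(|u T| + |v T|) := by
        refine (abs_add_le _ _).trans ?_
        rw [abs_mul, abs_of_pos hb]
        have h := abs_add_le (u T) (v T)
        nlinarith only [h, hb.le]
      have t2 : |2*b*c*(y T)| ≤ 2*b*c := by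
        rw [abs_mul, abs_of_pos (by positivity : (0:ℝ) < 2*b*c)]
        have := mul_le_mul_of_nonneg_left hyT (by positivity : (0:ℝ) ≤ 2*b*c)
        linarith
      linarith
    rw [hC₁def]
    nlinarith only [abs_nonneg (u T), abs_nonneg (deriv u T), hb.le, hc.le, l1, l2,
      mul_nonneg hb.le (abs_nonneg (u T)), mul_nonneg hb.le (abs_nonneg (deriv u T)),
      mul_nonneg (mul_nonneg hb.le hb.le) (abs_nonneg (u T)),
      mul_nonneg (mul_nonneg hb.le hc.le) (abs_nonneg (u T))]
  -- smallness of exp(-σ T)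
  have hsmall : C₁ * K * Real.exp (-σ * T) ≤ 1/2 := by
    have hlog : Real.log (2*C₁*K) / σ ≤ T := le_trans (le_max_right _ _) hT
    have h1 : Real.log (2*C₁*K) ≤ σ * T := by
      rw [div_le_iff₀ hσ] at hlog; linarith
    have h2 : Real.exp (-σ * T) ≤ (2*C₁*K)⁻¹ := by
      rw [← Real.exp_log (show (0:ℝ) < 2*C₁*K by positivity), ← Real.exp_neg]
      exact Real.exp_le_exp.2 (by linarith)
    have h3 : C₁ * K * Real.exp (-σ * T) ≤ C₁ * K * (2*C₁*K)⁻¹ :=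
      mul_le_mul_of_nonneg_left h2 (by positivity)
    have h4 : C₁ * K * (2*C₁*K)⁻¹ = 1/2 := by
      field_simp
    linarith
  -- bootstrap
  have hv0 : |v 0| + |deriv v 0| ≤ K * ((|v T| + |deriv v T|) * Real.exp (-σ * T)) := by
    have h := hv_bd 0 h0mem
    simpa using h
  have huT : |u T| + |deriv u T| ≤ K * ((|u 0| + |deriv u 0|) * Real.exp (-σ * T)) :=
    hu_bd T hTmem
  have hXnn : 0 ≤ |u 0| + |deriv u 0| := by positivity
  have hYnn : 0 ≤ |v T| + |deriv v T| := by positivity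
  have hX1 : |u 0| + |deriv u 0| ≤ C₁ + (|v T| + |deriv v T|)/2 := by
    have hm1 := mul_le_mul_of_nonneg_left hv0 hC₁0.le
    have hm2 := mul_le_mul_of_nonneg_right hsmall hYnn
    nlinarith only [hXc, hm1, hm2]
  have hY1 : |v T| + |deriv v T| ≤ C₁ + (|u 0| + |deriv u 0|)/2 := by
    have hm1 := mul_le_mul_of_nonneg_left huT hC₁0.le
    have hm2 := mul_le_mul_of_nonneg_right hsmall hXnn
    nlinarith only [hYc, hm1, hm2]
  have hX2 : |u 0| + |deriv u 0| ≤ 2*C₁ := by linarith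
  have hY2 : |v T| + |deriv v T| ≤ 2*C₁ := by linarith
  -- final estimate at t
  have hut := hu_bd t ht
  have hvt := hv_bd t ht
  have he1p : (0:ℝ) < Real.exp (-σ * t) := Real.exp_pos _
  have he2p : (0:ℝ) < Real.exp (-σ * (T - t)) := Real.exp_pos _
  have hP : |u t| + |deriv u t| ≤ 2*K*C₁*Real.exp (-σ * t) := by
    refine le_trans hut ?_
    have h := mul_le_mul_of_nonneg_left
      (mul_le_mul_of_nonneg_right hX2 he1p.le) hK0.le
    nlinarith only [h]
  have hQ : |v t| + |deriv v t| ≤ 2*K*C₁*Real.exp (-σ * (T - t)) := by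
    refine le_trans hvt ?_
    have h := mul_le_mul_of_nonneg_left
      (mul_le_mul_of_nonneg_right hY2 he2p.le) hK0.le
    nlinarith only [h]
  -- pointwise algebraic identities at t
  have m1 : 2*b*|deriv y t| ≤ (|u t| + |deriv u t|) + (|v t| + |deriv v t|) := by
    have e : v t - u t = 2*b*(deriv y t) := by simp only [hu_def, hv_def]; ring
    have h := abs_sub (v t) (u t)
    rw [e, habs2b] at h
    have := abs_nonneg (deriv u t); have := abs_nonneg (deriv v t)
    linarith
  have m2 : 2*b*|deriv (deriv y) t| ≤ (|u t| + |deriv u t|) + (|v t| + |deriv v t|) := by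
    have e : deriv v t - deriv u t = 2*b*(deriv (deriv y) t) := by
      rw [hdu, hdv]; ring
    have h := abs_sub (deriv v t) (deriv u t)
    rw [e, habs2b] at h
    have := abs_nonneg (u t); have := abs_nonneg (v t)
    linarith
  have m3 : 2*c*|y t| ≤ ((|u t| + |deriv u t|) + (|v t| + |deriv v t|))
      + 2*|deriv (deriv y) t| := by
    have e : 2*c*(y t) = (u t + v t) - 2*(deriv (deriv y) t) := by
      simp only [hu_def, hv_def]; ring
    have h : |2*c*(y t)| ≤ |u t| + |v t| + 2*|deriv (deriv y) t| := by
      rw [e]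
      refine (abs_sub _ _).trans ?_
      have h1 := abs_add_le (u t) (v t)
      have h2 : |2*(deriv (deriv y) t)| = 2*|deriv (deriv y) t| := by
        rw [abs_mul]; norm_num
      linarith
    rw [abs_mul, abs_of_pos (by positivity : (0:ℝ) < 2*c)] at h
    have := abs_nonneg (deriv u t); have := abs_nonneg (deriv v t)
    linarith
  have hmain : 4*b*c*(|y t| + |deriv y t| + |deriv (deriv y) t|)
      ≤ (2*b+2+4*c)*((|u t| + |deriv u t|) + (|v t| + |deriv v t|)) := by
    nlinarith only [mul_le_mul_of_nonneg_left m1 hc.le, mul_le_mul_of_nonneg_left m2 hc.le,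
      mul_le_mul_of_nonneg_left m3 hb.le, m2, hb.le, hc.le]
  have hPQ : (|u t| + |deriv u t|) + (|v t| + |deriv v t|)
      ≤ 2*K*C₁*(Real.exp (-σ * t) + Real.exp (-σ * (T - t))) := by
    nlinarith only [hP, hQ]
  have step1 := mul_le_mul_of_nonneg_left hPQ (by positivity : (0:ℝ) ≤ 2*b+2+4*c)
  have step2 : (2*b+2+4*c)*(2*K*C₁*(Real.exp (-σ * t) + Real.exp (-σ * (T - t))))
      ≤ (4*b*c*C)*(Real.exp (-σ * t) + Real.exp (-σ * (T - t))) := by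
    have h := mul_le_mul_of_nonneg_right hCge
      (by positivity : (0:ℝ) ≤ Real.exp (-σ * t) + Real.exp (-σ * (T - t)))
    nlinarith only [h]
  have hfinal : (4*b*c)*(|y t| + |deriv y t| + |iteratedDeriv 2 y t|)
      ≤ (4*b*c)*(C*(Real.exp (-σ * t) + Real.exp (-σ * (T - t)))) := by
    rw [hi2]
    nlinarith only [hmain, step1, step2]
  exact le_of_mul_le_mul_left hfinal (by positivity : (0:ℝ) < 4*b*c)
end

section
/- Let q1, q2, r be real numbers with q1 > 0, r > 0 and q2 ≥ 0. There exists T0 > 0 such that for every T ≥ T0 and all real numbers y0, v0, yT, vT, there exists a unique four times continuously differentiable function y : ℝ → ℝ satisfying r·y''''(t) − q2·y''(t) + q1·y(t) = 0 for all t ∈ [0,T] together with the boundary conditions y(0) = y0, y'(0) = v0, y(T) = yT, y'(T) = vT. -/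
open Real Set


open Set intervalIntegral

set_option maxHeartbeats 1000000 in
lemma energy_uniq (q1 q2 r : ℝ) (hq1 : 0 < q1) (hr : 0 < r) (hq2 : 0 ≤ q2)
    (T : ℝ) (hT : 0 < T) (w : ℝ → ℝ) (hw : ContDiff ℝ 4 w)
    (hode : ∀ t ∈ Set.Icc (0:ℝ) T,
      r * iteratedDeriv 4 w t - q2 * iteratedDeriv 2 w t + q1 * w t = 0)
    (h00 : w 0 = 0) (h01 : deriv w 0 = 0) (hT0 : w T = 0) (hT1 : deriv w T = 0) :
    Set.EqOn w 0 (Set.Icc (0:ℝ) T) := by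
  set w1 := deriv w with hw1def
  set w2 := deriv w1 with hw2def
  set w3 := deriv w2 with hw3def
  set w4 := deriv w3 with hw4def
  -- smoothness chain
  have hw' : ContDiff ℝ ((3:ℕ∞) + 1) w := by exact_mod_cast hw
  have hw1 : ContDiff ℝ 3 w1 := (contDiff_succ_iff_deriv.mp hw').2.2
  have hw1' : ContDiff ℝ ((2:ℕ∞) + 1) w1 := by exact_mod_cast hw1
  have hw2 : ContDiff ℝ 2 w2 := (contDiff_succ_iff_deriv.mp hw1').2.2
  have hw2' : ContDiff ℝ ((1:ℕ∞) + 1) w2 := by exact_mod_cast hw2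
  have hw3 : ContDiff ℝ 1 w3 := (contDiff_succ_iff_deriv.mp hw2').2.2
  have hw3' : ContDiff ℝ ((0:ℕ∞) + 1) w3 := by exact_mod_cast hw3
  have hw4 : Continuous w4 := by
    have := (contDiff_succ_iff_deriv.mp hw3').2.2
    exact this.continuous
  have cw : Continuous w := hw.continuous
  have cw1 : Continuous w1 := hw1.continuous
  have cw2 : Continuous w2 := hw2.continuous
  have cw3 : Continuous w3 := hw3.continuous
  -- HasDerivAt facts
  have dw : ∀ x, HasDerivAt w (w1 x) x := fun x =>
    ((hw.differentiable (by norm_num)) x).hasDerivAt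
  have dw1 : ∀ x, HasDerivAt w1 (w2 x) x := fun x =>
    ((hw1.differentiable (by norm_num)) x).hasDerivAt
  have dw2 : ∀ x, HasDerivAt w2 (w3 x) x := fun x =>
    ((hw2.differentiable (by norm_num)) x).hasDerivAt
  have dw3 : ∀ x, HasDerivAt w3 (w4 x) x := fun x =>
    ((hw3.differentiable (by norm_num)) x).hasDerivAt
  -- iterated derivatives
  have it2 : iteratedDeriv 2 w = w2 := by
    rw [show (2:ℕ) = 1 + 1 from rfl, iteratedDeriv_succ, iteratedDeriv_one]
  have it4 : iteratedDeriv 4 w = w4 := by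
    rw [show (4:ℕ) = 1 + 1 + 1 + 1 from rfl, iteratedDeriv_succ, iteratedDeriv_succ,
      iteratedDeriv_succ, iteratedDeriv_one]
  -- integrability
  have iw : IntervalIntegrable w MeasureTheory.volume 0 T := cw.intervalIntegrable _ _
  have iw1 : IntervalIntegrable w1 MeasureTheory.volume 0 T := cw1.intervalIntegrable _ _
  have iw2 : IntervalIntegrable w2 MeasureTheory.volume 0 T := cw2.intervalIntegrable _ _
  have iw3 : IntervalIntegrable w3 MeasureTheory.volume 0 T := cw3.intervalIntegrable _ _
  have iw4 : IntervalIntegrable w4 MeasureTheory.volume 0 T := hw4.intervalIntegrable _ _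
  -- integration by parts
  have ibp1 : ∫ x in (0:ℝ)..T, w x * w4 x
      = w T * w3 T - w 0 * w3 0 - ∫ x in (0:ℝ)..T, w1 x * w3 x :=
    integral_mul_deriv_eq_deriv_mul (fun x _ => dw x) (fun x _ => dw3 x) iw1 iw4
  have ibp2 : ∫ x in (0:ℝ)..T, w1 x * w3 x
      = w1 T * w2 T - w1 0 * w2 0 - ∫ x in (0:ℝ)..T, w2 x * w2 x :=
    integral_mul_deriv_eq_deriv_mul (fun x _ => dw1 x) (fun x _ => dw2 x) iw2 iw3
  have ibp3 : ∫ x in (0:ℝ)..T, w x * w2 x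
      = w T * w1 T - w 0 * w1 0 - ∫ x in (0:ℝ)..T, w1 x * w1 x :=
    integral_mul_deriv_eq_deriv_mul (fun x _ => dw x) (fun x _ => dw1 x) iw1 iw2
  rw [h00, hT0] at ibp1 ibp3
  have hb1 : w1 T = 0 := hT1
  have hb0 : w1 0 = 0 := h01
  rw [hb0, hb1] at ibp2 ibp3
  simp only [zero_mul, mul_zero, sub_zero, zero_sub] at ibp1 ibp2 ibp3
  -- the integral of the equation against w is 0
  have hker : ∫ x in (0:ℝ)..T,
      (r * (w x * w4 x) - q2 * (w x * w2 x) + q1 * (w x * w x)) = 0 := by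
    have hcong : Set.EqOn
        (fun x => r * (w x * w4 x) - q2 * (w x * w2 x) + q1 * (w x * w x))
        (fun _ => (0:ℝ)) (Set.uIcc (0:ℝ) T) := by
      intro x hx
      rw [Set.uIcc_of_le hT.le] at hx
      have h := hode x hx
      rw [it2, it4] at h
      have h2 : (r * w4 x - q2 * w2 x + q1 * w x) * w x = 0 := by rw [h]; ring
      simp only
      nlinarith [h2]
    rw [intervalIntegral.integral_congr hcong]
    simp
  -- expand linearity
  have hiw4 : IntervalIntegrable (fun x => w x * w4 x) MeasureTheory.volume 0 T :=
    (cw.mul hw4).intervalIntegrable _ _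
  have hiw2 : IntervalIntegrable (fun x => w x * w2 x) MeasureTheory.volume 0 T :=
    (cw.mul cw2).intervalIntegrable _ _
  have hiww : IntervalIntegrable (fun x => w x * w x) MeasureTheory.volume 0 T :=
    (cw.mul cw).intervalIntegrable _ _
  have hexp : r * (∫ x in (0:ℝ)..T, w x * w4 x)
      - q2 * (∫ x in (0:ℝ)..T, w x * w2 x)
      + q1 * (∫ x in (0:ℝ)..T, w x * w x) = 0 := by
    rw [← intervalIntegral.integral_const_mul, ← intervalIntegral.integral_const_mul,
      ← intervalIntegral.integral_const_mul,
      ← intervalIntegral.integral_sub (hiw4.const_mul r) (hiw2.const_mul q2),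
      ← intervalIntegral.integral_add
        ((hiw4.const_mul r).sub (hiw2.const_mul q2)) (hiww.const_mul q1)]
    exact hker
  set I0 := ∫ x in (0:ℝ)..T, w x * w x with hI0
  set I1 := ∫ x in (0:ℝ)..T, w1 x * w1 x with hI1
  set I2 := ∫ x in (0:ℝ)..T, w2 x * w2 x with hI2
  have key : r * I2 + q2 * I1 + q1 * I0 = 0 := by
    rw [ibp1, ibp2, ibp3] at hexp
    linarith [hexp]
  have hI0n : 0 ≤ I0 := intervalIntegral.integral_nonneg hT.le
    (fun u _ => mul_self_nonneg _)
  have hI1n : 0 ≤ I1 := intervalIntegral.integral_nonneg hT.le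
    (fun u _ => mul_self_nonneg _)
  have hI2n : 0 ≤ I2 := intervalIntegral.integral_nonneg hT.le
    (fun u _ => mul_self_nonneg _)
  have hI0z : I0 = 0 := by nlinarith
  -- conclude w = 0 on Icc
  intro s hs
  by_contra hne
  have hsne : w s ≠ 0 := by simpa using hne
  have hs0 : s ≠ 0 := fun h => hsne (h ▸ h00)
  have hsT : s ≠ T := fun h => hsne (h ▸ hT0)
  have hsI : s ∈ Set.Ioo (0:ℝ) T :=
    ⟨lt_of_le_of_ne hs.1 (Ne.symm hs0), lt_of_le_of_ne hs.2 hsT⟩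
  -- find a neighborhood where w*w > 0
  have hfpos : 0 < w s * w s := mul_self_pos.mpr hsne
  have hopen : IsOpen {t : ℝ | 0 < w t * w t} := isOpen_lt continuous_const (cw.mul cw)
  obtain ⟨ε, hε, hball⟩ := Metric.isOpen_iff.mp hopen s hfpos
  set δ := min (ε / 2) (min (s / 2) ((T - s) / 2)) with hδdef
  have hδpos : 0 < δ := by
    apply lt_min (by linarith) (lt_min (by linarith [hsI.1]) (by linarith [hsI.2]))
  set a := s - δ with ha
  set b := s + δ with hb
  have hab : a < b := by simp [ha, hb]; linarith
  have h0a : 0 ≤ a := by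
    have : δ ≤ s / 2 := le_trans (min_le_right _ _) (min_le_left _ _)
    simp only [ha]; linarith [hsI.1]
  have hbT : b ≤ T := by
    have : δ ≤ (T - s) / 2 := le_trans (min_le_right _ _) (min_le_right _ _)
    simp only [hb]; linarith
  have hsub : ∀ x ∈ Set.Ioo a b, 0 < w x * w x := by
    intro x hx
    apply hball
    rw [Metric.mem_ball, Real.dist_eq, abs_lt]
    have hδε : δ ≤ ε / 2 := min_le_left _ _
    constructor <;> [skip; skip] <;> simp only [ha, hb] at hx <;>
      cases hx with
      | intro h1 h2 => linarith
  have hmid : 0 < ∫ x in a..b, w x * w x :=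
    intervalIntegral_pos_of_pos_on ((cw.mul cw).intervalIntegrable _ _) hsub hab
  have hsplit : I0 = (∫ x in (0:ℝ)..a, w x * w x) + (∫ x in a..b, w x * w x)
      + ∫ x in b..T, w x * w x := by
    rw [hI0,
      ← intervalIntegral.integral_add_adjacent_intervals (f := fun x => w x * w x)
        ((cw.mul cw).intervalIntegrable (0:ℝ) a) ((cw.mul cw).intervalIntegrable a T),
      ← intervalIntegral.integral_add_adjacent_intervals (f := fun x => w x * w x)
        ((cw.mul cw).intervalIntegrable a b) ((cw.mul cw).intervalIntegrable b T)]
    ring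
  have hleft : 0 ≤ ∫ x in (0:ℝ)..a, w x * w x :=
    intervalIntegral.integral_nonneg h0a (fun u _ => mul_self_nonneg _)
  have hright : 0 ≤ ∫ x in b..T, w x * w x :=
    intervalIntegral.integral_nonneg hbT (fun u _ => mul_self_nonneg _)
  linarith [hI0z, hsplit, hmid, hleft, hright]

noncomputable section

namespace Stmt4Aux


abbrev E4 := Fin 4 → ℝ

def Lmat (q1 q2 r : ℝ) : E4 →ₗ[ℝ] E4 where
  toFun v := ![v 1, v 2, v 3, (q2 / r) * v 2 - (q1 / r) * v 0]
  map_add' u v := by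
    funext i; fin_cases i <;> simp <;> ring
  map_smul' a v := by
    funext i; fin_cases i <;> simp <;> ring

def Amap (q1 q2 r : ℝ) : E4 →L[ℝ] E4 := (Lmat q1 q2 r).toContinuousLinearMap

lemma Amap_apply (q1 q2 r : ℝ) (v : E4) :
    Amap q1 q2 r v = ![v 1, v 2, v 3, (q2 / r) * v 2 - (q1 / r) * v 0] := rfl

def G (q1 q2 r : ℝ) (t : ℝ) : E4 →L[ℝ] E4 := NormedSpace.exp (t • Amap q1 q2 r)

lemma hasDerivAt_G (q1 q2 r t : ℝ) :
    HasDerivAt (G q1 q2 r) (G q1 q2 r t * Amap q1 q2 r) t :=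
  hasDerivAt_exp_smul_const (𝕂 := ℝ) (Amap q1 q2 r) t

lemma G_zero (q1 q2 r : ℝ) : G q1 q2 r 0 = 1 := by
  simp [G, NormedSpace.exp_zero]

lemma G_neg_mul (q1 q2 r t : ℝ) : G q1 q2 r (-t) * G q1 q2 r t = 1 := by
  letI : NormedAlgebra ℚ (E4 →L[ℝ] E4) := NormedAlgebra.restrictScalars ℚ ℝ _
  rw [G, G, ← NormedSpace.exp_add_of_commute
    (((Commute.refl (Amap q1 q2 r)).smul_left (-t)).smul_right t)]
  rw [show -t • Amap q1 q2 r + t • Amap q1 q2 r = 0 by module]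
  simp [NormedSpace.exp_zero]


lemma Gmul_comm (q1 q2 r t : ℝ) :
    G q1 q2 r t * Amap q1 q2 r = Amap q1 q2 r * G q1 q2 r t :=
  (((Commute.refl (Amap q1 q2 r)).smul_left t).exp_left).eq

def sol (q1 q2 r : ℝ) (c : E4) (t : ℝ) : E4 := G q1 q2 r t c

lemma hasDerivAt_sol (q1 q2 r : ℝ) (c : E4) (t : ℝ) :
    HasDerivAt (sol q1 q2 r c) (Amap q1 q2 r (sol q1 q2 r c t)) t := by
  have h := (hasDerivAt_G q1 q2 r t).clm_apply (hasDerivAt_const t c)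
  simp only [ContinuousLinearMap.add_apply, map_zero, add_zero] at h
  rw [Gmul_comm] at h
  exact h

lemma hasDerivAt_sol_apply (q1 q2 r : ℝ) (c : E4) (t : ℝ) (k : Fin 4) :
    HasDerivAt (fun t => sol q1 q2 r c t k) (Amap q1 q2 r (sol q1 q2 r c t) k) t :=
  (ContinuousLinearMap.proj (R := ℝ) (φ := fun _ : Fin 4 => ℝ)
    k).hasFDerivAt.comp_hasDerivAt t (hasDerivAt_sol q1 q2 r c t)

lemma contDiff_G (q1 q2 r : ℝ) (n : ℕ) : ContDiff ℝ n (G q1 q2 r) := by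
  induction n with
  | zero =>
    exact contDiff_zero.mpr
      (Differentiable.continuous (fun t => (hasDerivAt_G q1 q2 r t).differentiableAt))
  | succ n ih =>
    rw [show ((n + 1 : ℕ) : WithTop ℕ∞) = (n : WithTop ℕ∞) + 1 by push_cast; rfl]
    refine contDiff_succ_iff_deriv.mpr ⟨fun t => (hasDerivAt_G q1 q2 r t).differentiableAt,
      ?_, ?_⟩
    · intro h; exact absurd h (by simp)
    · have : deriv (G q1 q2 r) = fun t => G q1 q2 r t * Amap q1 q2 r := by
        funext t; exact (hasDerivAt_G q1 q2 r t).deriv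
      rw [this]
      exact ih.mul contDiff_const

lemma contDiff_sol_apply (q1 q2 r : ℝ) (c : E4) (k : Fin 4) (n : ℕ) :
    ContDiff ℝ n (fun t => sol q1 q2 r c t k) := by
  have h1 : ContDiff ℝ n (sol q1 q2 r c) :=
    (ContinuousLinearMap.apply ℝ E4 c).contDiff.comp (contDiff_G q1 q2 r n)
  exact (ContinuousLinearMap.proj (R := ℝ) (φ := fun _ : Fin 4 => ℝ) k).contDiff.comp h1

lemma dsol0 (q1 q2 r : ℝ) (c : E4) (t : ℝ) :
    HasDerivAt (fun u => sol q1 q2 r c u 0) (sol q1 q2 r c t 1) t := by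
  simpa [Amap_apply] using hasDerivAt_sol_apply q1 q2 r c t 0

lemma dsol1 (q1 q2 r : ℝ) (c : E4) (t : ℝ) :
    HasDerivAt (fun u => sol q1 q2 r c u 1) (sol q1 q2 r c t 2) t := by
  simpa [Amap_apply] using hasDerivAt_sol_apply q1 q2 r c t 1

lemma dsol2 (q1 q2 r : ℝ) (c : E4) (t : ℝ) :
    HasDerivAt (fun u => sol q1 q2 r c u 2) (sol q1 q2 r c t 3) t := by
  simpa [Amap_apply] using hasDerivAt_sol_apply q1 q2 r c t 2

lemma dsol3 (q1 q2 r : ℝ) (c : E4) (t : ℝ) :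
    HasDerivAt (fun u => sol q1 q2 r c u 3)
      ((q2 / r) * sol q1 q2 r c t 2 - (q1 / r) * sol q1 q2 r c t 0) t := by
  simpa [Amap_apply] using hasDerivAt_sol_apply q1 q2 r c t 3

lemma deriv_sol0 (q1 q2 r : ℝ) (c : E4) :
    deriv (fun u => sol q1 q2 r c u 0) = fun t => sol q1 q2 r c t 1 :=
  funext fun t => (dsol0 q1 q2 r c t).deriv

lemma deriv_sol1 (q1 q2 r : ℝ) (c : E4) :
    deriv (fun u => sol q1 q2 r c u 1) = fun t => sol q1 q2 r c t 2 :=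
  funext fun t => (dsol1 q1 q2 r c t).deriv

lemma deriv_sol2 (q1 q2 r : ℝ) (c : E4) :
    deriv (fun u => sol q1 q2 r c u 2) = fun t => sol q1 q2 r c t 3 :=
  funext fun t => (dsol2 q1 q2 r c t).deriv

lemma deriv_sol3 (q1 q2 r : ℝ) (c : E4) :
    deriv (fun u => sol q1 q2 r c u 3)
      = fun t => (q2 / r) * sol q1 q2 r c t 2 - (q1 / r) * sol q1 q2 r c t 0 :=
  funext fun t => (dsol3 q1 q2 r c t).deriv

lemma it2_sol (q1 q2 r : ℝ) (c : E4) :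
    iteratedDeriv 2 (fun u => sol q1 q2 r c u 0) = fun t => sol q1 q2 r c t 2 := by
  rw [iteratedDeriv_eq_iterate]
  show deriv (deriv (fun u => sol q1 q2 r c u 0)) = _
  rw [deriv_sol0, deriv_sol1]

lemma it4_sol (q1 q2 r : ℝ) (c : E4) :
    iteratedDeriv 4 (fun u => sol q1 q2 r c u 0)
      = fun t => (q2 / r) * sol q1 q2 r c t 2 - (q1 / r) * sol q1 q2 r c t 0 := by
  rw [iteratedDeriv_eq_iterate]
  show deriv (deriv (deriv (deriv (fun u => sol q1 q2 r c u 0)))) = _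
  rw [deriv_sol0, deriv_sol1, deriv_sol2, deriv_sol3]

lemma sol_ode (q1 q2 r : ℝ) (hr : r ≠ 0) (c : E4) (t : ℝ) :
    r * iteratedDeriv 4 (fun u => sol q1 q2 r c u 0) t
      - q2 * iteratedDeriv 2 (fun u => sol q1 q2 r c u 0) t
      + q1 * sol q1 q2 r c t 0 = 0 := by
  rw [it2_sol, it4_sol]
  field_simp
  ring

def bmap (q1 q2 r T : ℝ) : E4 →ₗ[ℝ] E4 :=
  LinearMap.pi ![
    (LinearMap.proj 0).comp (G q1 q2 r 0).toLinearMap,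
    (LinearMap.proj 1).comp (G q1 q2 r 0).toLinearMap,
    (LinearMap.proj 0).comp (G q1 q2 r T).toLinearMap,
    (LinearMap.proj 1).comp (G q1 q2 r T).toLinearMap]

lemma bmap_apply (q1 q2 r T : ℝ) (c : E4) :
    bmap q1 q2 r T c = ![sol q1 q2 r c 0 0, sol q1 q2 r c 0 1,
      sol q1 q2 r c T 0, sol q1 q2 r c T 1] := by
  funext i
  fin_cases i <;>
    simp [bmap, sol, LinearMap.pi_apply]


lemma iter_sub {f g : ℝ → ℝ} (n : ℕ) (hf : ContDiff ℝ n f) (hg : ContDiff ℝ n g) (x : ℝ) :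
    iteratedDeriv n (f - g) x = iteratedDeriv n f x - iteratedDeriv n g x := by
  simp only [iteratedDeriv_eq_iteratedFDeriv]
  rw [sub_eq_add_neg, iteratedFDeriv_add_apply (g := -g) hf.contDiffAt (by exact hg.neg.contDiffAt),
    iteratedFDeriv_neg_apply]
  simp [sub_eq_add_neg]

lemma bmap_injective (q1 q2 r : ℝ) (hq1 : 0 < q1) (hr : 0 < r) (hq2 : 0 ≤ q2)
    (T : ℝ) (hT : 0 < T) : Function.Injective (bmap q1 q2 r T) := by
  rw [← LinearMap.ker_eq_bot, LinearMap.ker_eq_bot']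
  intro c hc
  rw [bmap_apply] at hc
  have hc0 : sol q1 q2 r c 0 0 = 0 := by simpa using congrFun hc 0
  have hc1 : sol q1 q2 r c 0 1 = 0 := by simpa using congrFun hc 1
  have hc2 : sol q1 q2 r c T 0 = 0 := by simpa using congrFun hc 2
  have hc3 : sol q1 q2 r c T 1 = 0 := by simpa using congrFun hc 3
  set y : ℝ → ℝ := fun t => sol q1 q2 r c t 0 with hy
  have hy4 : ContDiff ℝ 4 y := by exact_mod_cast contDiff_sol_apply q1 q2 r c 0 4
  have hEq : Set.EqOn y 0 (Set.Icc (0:ℝ) T) := by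
    apply energy_uniq q1 q2 r hq1 hr hq2 T hT y hy4
    · intro t _; exact sol_ode q1 q2 r hr.ne' c t
    · exact hc0
    · rw [hy, deriv_sol0]; exact hc1
    · exact hc2
    · rw [hy, deriv_sol0]; exact hc3
  -- derivatives vanish on the open interval
  have hmem : T / 2 ∈ Set.Ioo (0:ℝ) T := ⟨by linarith, by linarith⟩
  have e0 : Set.EqOn (fun t => sol q1 q2 r c t 0) (fun _ => (0:ℝ)) (Set.Ioo (0:ℝ) T) :=
    fun t ht => hEq (Set.Ioo_subset_Icc_self ht)
  have step : ∀ f g : ℝ → ℝ, (∀ t, HasDerivAt f (g t) t) →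
      Set.EqOn f (fun _ => (0:ℝ)) (Set.Ioo (0:ℝ) T) →
      Set.EqOn g (fun _ => (0:ℝ)) (Set.Ioo (0:ℝ) T) := by
    intro f g hfg hf0 t ht
    have hnhds : Set.Ioo (0:ℝ) T ∈ nhds t := isOpen_Ioo.mem_nhds ht
    have hev : f =ᶠ[nhds t] (fun _ => (0:ℝ)) := Filter.eventuallyEq_of_mem hnhds hf0
    have : deriv f t = deriv (fun _ => (0:ℝ)) t := hev.deriv_eq
    rw [(hfg t).deriv] at this
    simpa using this
  have e1 := step _ _ (dsol0 q1 q2 r c) e0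
  have e2 := step _ _ (dsol1 q1 q2 r c) e1
  have e3 := step _ _ (dsol2 q1 q2 r c) e2
  have hst : sol q1 q2 r c (T / 2) = 0 := by
    funext i
    fin_cases i
    · exact e0 hmem
    · exact e1 hmem
    · exact e2 hmem
    · exact e3 hmem
  have h2 : G q1 q2 r (-(T / 2)) (sol q1 q2 r c (T / 2)) = c := by
    have h1 := congrArg (fun f : E4 →L[ℝ] E4 => f c) (G_neg_mul q1 q2 r (T / 2))
    simpa [ContinuousLinearMap.mul_apply, sol] using h1
  rw [hst, map_zero] at h2
  exact h2.symm

theorem stmt4' (q1 q2 r : ℝ) (hq1 : 0 < q1) (hr : 0 < r) (hq2 : 0 ≤ q2) :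
    ∃ T0 > (0:ℝ), ∀ T ≥ T0, ∀ y0 v0 yT vT : ℝ,
      ∃ y : ℝ → ℝ,
        (ContDiff ℝ 4 y ∧
          (∀ t ∈ Set.Icc (0:ℝ) T,
            r * iteratedDeriv 4 y t - q2 * iteratedDeriv 2 y t + q1 * y t = 0) ∧
          y 0 = y0 ∧ deriv y 0 = v0 ∧ y T = yT ∧ deriv y T = vT) ∧
        ∀ z : ℝ → ℝ,
          (ContDiff ℝ 4 z ∧
            (∀ t ∈ Set.Icc (0:ℝ) T,
              r * iteratedDeriv 4 z t - q2 * iteratedDeriv 2 z t + q1 * z t = 0) ∧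
            z 0 = y0 ∧ deriv z 0 = v0 ∧ z T = yT ∧ deriv z T = vT) →
          Set.EqOn z y (Set.Icc (0:ℝ) T) := by
  refine ⟨1, one_pos, fun T hT y0 v0 yT vT => ?_⟩
  have hTpos : (0:ℝ) < T := lt_of_lt_of_le one_pos hT
  have hsurj : Function.Surjective (bmap q1 q2 r T) :=
    LinearMap.injective_iff_surjective.mp (bmap_injective q1 q2 r hq1 hr hq2 T hTpos)
  obtain ⟨c, hc⟩ := hsurj ![y0, v0, yT, vT]
  rw [bmap_apply] at hc
  have hc0 : sol q1 q2 r c 0 0 = y0 := by simpa using congrFun hc 0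
  have hc1 : sol q1 q2 r c 0 1 = v0 := by simpa using congrFun hc 1
  have hc2 : sol q1 q2 r c T 0 = yT := by simpa using congrFun hc 2
  have hc3 : sol q1 q2 r c T 1 = vT := by simpa using congrFun hc 3
  set y : ℝ → ℝ := fun t => sol q1 q2 r c t 0 with hy
  have hy4 : ContDiff ℝ 4 y := by exact_mod_cast contDiff_sol_apply q1 q2 r c 0 4
  have hyode : ∀ t ∈ Set.Icc (0:ℝ) T,
      r * iteratedDeriv 4 y t - q2 * iteratedDeriv 2 y t + q1 * y t = 0 :=
    fun t _ => sol_ode q1 q2 r hr.ne' c t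
  have hdy : deriv y = fun t => sol q1 q2 r c t 1 := by rw [hy, deriv_sol0]
  refine ⟨y, ⟨hy4, hyode, hc0, by rw [hdy]; exact hc1, hc2, by rw [hdy]; exact hc3⟩, ?_⟩
  rintro z ⟨hz4, hzode, hz0, hz1, hz2, hz3⟩
  have hw4 : ContDiff ℝ 4 (z - y) := hz4.sub hy4
  have hz4n : ContDiff ℝ (4:ℕ) z := by exact_mod_cast hz4
  have hy4n : ContDiff ℝ (4:ℕ) y := by exact_mod_cast hy4
  have hz2n : ContDiff ℝ (2:ℕ) z := hz4n.of_le (by norm_cast)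
  have hy2n : ContDiff ℝ (2:ℕ) y := hy4n.of_le (by norm_cast)
  have hdz : Differentiable ℝ z := hz4.differentiable (by norm_num)
  have hdyy : Differentiable ℝ y := hy4.differentiable (by norm_num)
  have hwode : ∀ t ∈ Set.Icc (0:ℝ) T,
      r * iteratedDeriv 4 (z - y) t - q2 * iteratedDeriv 2 (z - y) t + q1 * (z - y) t = 0 := by
    intro t ht
    rw [iter_sub 4 hz4n hy4n, iter_sub 2 hz2n hy2n]
    have h1 := hyode t ht
    have h2 := hzode t ht
    simp only [Pi.sub_apply]
    linarith
  have hdw : deriv (z - y) = fun t => deriv z t - deriv y t := by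
    funext t
    exact deriv_sub (hdz t) (hdyy t)
  have hEq : Set.EqOn (z - y) 0 (Set.Icc (0:ℝ) T) := by
    apply energy_uniq q1 q2 r hq1 hr hq2 T hTpos (z - y) hw4 hwode
    · show z 0 - y 0 = 0
      rw [hz0, hy]; simp [hc0]
    · rw [hdw]
      show deriv z 0 - deriv y 0 = 0
      rw [hz1, hdy]; simp [hc1]
    · show z T - y T = 0
      rw [hz2, hy]; simp [hc2]
    · rw [hdw]
      show deriv z T - deriv y T = 0
      rw [hz3, hdy]; simp [hc3]
  intro s hs
  have := hEq hs
  simpa [sub_eq_zero] using this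

end Stmt4Aux

end

/-- for large horizons, unique solvability of the two-point boundary value
problem for the fourth-order reduced Euler–Lagrange equation of the double integrator
`r·y'''' − q2·y'' + q1·y = 0` on `[0,T]`, with prescribed position and velocity at both
endpoints.  (Uniqueness is uniqueness of the solution on `[0,T]`, where the equation holds.) -/
theorem stmt4 (q1 q2 r : ℝ) (hq1 : 0 < q1) (hr : 0 < r) (hq2 : 0 ≤ q2) :
    ∃ T0 > (0:ℝ), ∀ T ≥ T0, ∀ y0 v0 yT vT : ℝ,
      ∃ y : ℝ → ℝ,
        (ContDiff ℝ 4 y ∧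
          (∀ t ∈ Set.Icc (0:ℝ) T,
            r * iteratedDeriv 4 y t - q2 * iteratedDeriv 2 y t + q1 * y t = 0) ∧
          y 0 = y0 ∧ deriv y 0 = v0 ∧ y T = yT ∧ deriv y T = vT) ∧
        ∀ z : ℝ → ℝ,
          (ContDiff ℝ 4 z ∧
            (∀ t ∈ Set.Icc (0:ℝ) T,
              r * iteratedDeriv 4 z t - q2 * iteratedDeriv 2 z t + q1 * z t = 0) ∧
            z 0 = y0 ∧ deriv z 0 = v0 ∧ z T = yT ∧ deriv z T = vT) →
          Set.EqOn z y (Set.Icc (0:ℝ) T) := by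
  exact Stmt4Aux.stmt4' q1 q2 r hq1 hr hq2
end

section
/- Let ω > 0 and let a0, b0, aT, bT be real numbers satisfying the admissibility conditions a0 − ω·b0 ≠ 0 and aT + ω·bT ≠ 0. Then there exist T0 > 0 and C > 0 such that for every T ≥ T0 and all real numbers c0, cT, there exists a unique twice differentiable function y : ℝ → ℝ with y''(t) = ω^2·y(t) for all t ∈ ℝ, a0·y(0) + b0·y'(0) = c0 and aT·y(T) + bT·y'(T) = cT; moreover |y(t)| + |y'(t)| ≤ C·(|c0| + |cT|)·( e^{−ω·t} + e^{−ω·(T−t)} ) for all t ∈ [0,T]. -/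
open Real Set

set_option maxHeartbeats 800000


private lemma expD (c : ℝ) (t : ℝ) :
    HasDerivAt (fun s : ℝ => Real.exp (c * s)) (c * Real.exp (c * t)) t := by
  simpa [mul_comm] using ((hasDerivAt_id t).const_mul c).exp

private lemma solD (ω p q t : ℝ) :
    HasDerivAt (fun s : ℝ => p * Real.exp (ω * s) + q * Real.exp (-(ω * s)))
      (ω * p * Real.exp (ω * t) - ω * q * Real.exp (-(ω * t))) t := by
  have h1 := (expD ω t).const_mul p
  have h2 := (expD (-ω) t).const_mul q
  simp only [neg_mul] at h2
  exact (h1.add h2).congr_deriv (by ring)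

private lemma absBound (ω t x z : ℝ) :
    |x * Real.exp (ω * t) + z * Real.exp (-(ω * t))|
      ≤ |x| * Real.exp (ω * t) + |z| * Real.exp (-(ω * t)) := by
  calc |x * Real.exp (ω * t) + z * Real.exp (-(ω * t))|
      ≤ |x * Real.exp (ω * t)| + |z * Real.exp (-(ω * t))| := abs_add_le _ _
    _ = |x| * Real.exp (ω * t) + |z| * Real.exp (-(ω * t)) := by
        simp [abs_mul, Real.abs_exp]

private lemma rep (ω : ℝ) (hω : ω ≠ 0) (y : ℝ → ℝ)
    (h1 : Differentiable ℝ y) (h2 : Differentiable ℝ (deriv y))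
    (hode : ∀ t, deriv (deriv y) t = ω ^ 2 * y t) :
    ∀ t, y t = (deriv y 0 + ω * y 0) / (2 * ω) * Real.exp (ω * t)
              + (ω * y 0 - deriv y 0) / (2 * ω) * Real.exp (-(ω * t))
        ∧ deriv y t = ω * ((deriv y 0 + ω * y 0) / (2 * ω)) * Real.exp (ω * t)
              - ω * ((ω * y 0 - deriv y 0) / (2 * ω)) * Real.exp (-(ω * t)) := by
  have const : ∀ c : ℝ, c ^ 2 = ω ^ 2 →
      ∀ t, (deriv y t + c * y t) * Real.exp (-c * t) = deriv y 0 + c * y 0 := by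
    intro c hc
    have hg : ∀ t, HasDerivAt (fun s => (deriv y s + c * y s) * Real.exp (-c * s)) 0 t := by
      intro t
      have hy : HasDerivAt y (deriv y t) t := (h1 t).hasDerivAt
      have hy2 : HasDerivAt (deriv y) (ω ^ 2 * y t) t := (hode t) ▸ (h2 t).hasDerivAt
      have hs : HasDerivAt (fun s => deriv y s + c * y s)
          (ω ^ 2 * y t + c * deriv y t) t := hy2.add (hy.const_mul c)
      have := hs.mul (expD (-c) t)
      exact this.congr_deriv (by rw [← hc]; ring)
    intro t
    have := is_const_of_deriv_eq_zero (fun s => (hg s).differentiableAt)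
      (fun s => (hg s).deriv) t 0
    simpa using this
  intro t
  have hA := const ω rfl t
  have hB := const (-ω) (by ring) t
  have e1 : Real.exp (-ω * t) * Real.exp (ω * t) = 1 := by
    rw [← Real.exp_add]; norm_num
  have h3 : deriv y t + ω * y t = (deriv y 0 + ω * y 0) * Real.exp (ω * t) := by
    calc deriv y t + ω * y t
        = ((deriv y t + ω * y t) * Real.exp (-ω * t)) * Real.exp (ω * t) := by
          rw [mul_assoc, e1, mul_one]
      _ = _ := by rw [hA]
  have h4 : deriv y t - ω * y t = (deriv y 0 - ω * y 0) * Real.exp (-ω * t) := by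
    have hB' : (deriv y t + -ω * y t) * Real.exp (ω * t) = deriv y 0 + -ω * y 0 := by
      simpa [neg_neg, neg_mul] using hB
    calc deriv y t - ω * y t
        = ((deriv y t + -ω * y t) * Real.exp (ω * t)) * Real.exp (-ω * t) := by
          rw [mul_assoc, mul_comm (Real.exp (ω*t)), e1, mul_one]; ring
      _ = _ := by rw [hB']; ring
  simp only [neg_mul] at h3 h4
  constructor
  · rw [div_mul_eq_mul_div, div_mul_eq_mul_div, ← add_div, eq_div_iff (by
      exact mul_ne_zero two_ne_zero hω)]
    linear_combination h3 - h4
  · field_simp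
    linear_combination h3 + h4

/-- cheap-control exponential turnpike for the double integrator.  Under the
admissibility conditions `a0 − ω·b0 ≠ 0` and `aT + ω·bT ≠ 0`, for all large horizons `T`
and all boundary data `(c0, cT)`, the mixed two-point boundary value problem for
`y'' = ω²·y` has a unique solution, and it satisfies the two-boundary-layer estimate
`|y(t)| + |y'(t)| ≤ C·(|c0| + |cT|)·(e^{−ωt} + e^{−ω(T−t)})` on `[0,T]`. -/
theorem stmt8 (ω a0 b0 aT bT : ℝ) (hω : 0 < ω)
    (h0 : a0 - ω * b0 ≠ 0) (hT : aT + ω * bT ≠ 0) :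
    ∃ T0 > (0:ℝ), ∃ C > (0:ℝ), ∀ T ≥ T0, ∀ c0 cT : ℝ,
      (∃! y : ℝ → ℝ,
        Differentiable ℝ y ∧ Differentiable ℝ (deriv y) ∧
        (∀ t : ℝ, deriv (deriv y) t = ω ^ 2 * y t) ∧
        a0 * y 0 + b0 * deriv y 0 = c0 ∧
        aT * y T + bT * deriv y T = cT) ∧
      (∀ y : ℝ → ℝ,
        Differentiable ℝ y → Differentiable ℝ (deriv y) →
        (∀ t : ℝ, deriv (deriv y) t = ω ^ 2 * y t) →
        a0 * y 0 + b0 * deriv y 0 = c0 →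
        aT * y T + bT * deriv y T = cT →
        ∀ t ∈ Set.Icc (0:ℝ) T,
          |y t| + |deriv y t|
            ≤ C * (|c0| + |cT|) * (Real.exp (-(ω * t)) + Real.exp (-(ω * (T - t))))) := by
  obtain ⟨A, hA⟩ : ∃ A : ℝ, A = a0 - ω * b0 := ⟨_, rfl⟩
  obtain ⟨B, hB⟩ : ∃ B : ℝ, B = a0 + ω * b0 := ⟨_, rfl⟩
  obtain ⟨A', hA'⟩ : ∃ A' : ℝ, A' = aT + ω * bT := ⟨_, rfl⟩
  obtain ⟨B', hB'⟩ : ∃ B' : ℝ, B' = aT - ω * bT := ⟨_, rfl⟩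
  have h0' : A ≠ 0 := hA ▸ h0
  have hT' : A' ≠ 0 := hA' ▸ hT
  have hAA : 0 < |A * A'| := abs_pos.mpr (mul_ne_zero h0' hT')
  obtain ⟨M, hM⟩ : ∃ M : ℝ, M = 2 * (|A| + |B| + |A'| + |B'| + 1) / |A * A'| := ⟨_, rfl⟩
  have hMpos : 0 < M := by rw [hM]; exact div_pos (by positivity) hAA
  refine ⟨max 1 (Real.log (2 * |B * B'| / |A * A'| + 1) / ω),
    lt_of_lt_of_le one_pos (le_max_left _ _),
    (1 + ω) * M, mul_pos (by linarith) hMpos, ?_⟩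
  intro T hTT c0 cT
  have hT1 : (1:ℝ) ≤ T := le_trans (le_max_left _ _) hTT
  obtain ⟨E, hE⟩ : ∃ E : ℝ, E = Real.exp (ω * T) := ⟨_, rfl⟩
  obtain ⟨ε, hε⟩ : ∃ e : ℝ, e = Real.exp (-(ω * T)) := ⟨_, rfl⟩
  have hεE : ε * E = 1 := by rw [hε, hE, ← Real.exp_add]; simp
  have hEpos : (0:ℝ) < E := hE ▸ Real.exp_pos _
  have hεpos : (0:ℝ) < ε := hε ▸ Real.exp_pos _
  have hE1 : (1:ℝ) ≤ E := by rw [hE]; exact Real.one_le_exp (by nlinarith)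
  have hε1 : ε ≤ 1 := by nlinarith
  have hEbig : 2 * |B * B'| / |A * A'| + 1 ≤ E := by
    rw [hE]
    have harg : (0:ℝ) < 2 * |B * B'| / |A * A'| + 1 := by positivity
    calc 2 * |B * B'| / |A * A'| + 1
        = Real.exp (Real.log (2 * |B * B'| / |A * A'| + 1)) := (Real.exp_log harg).symm
      _ ≤ Real.exp (ω * T) := by
          apply Real.exp_le_exp.mpr
          have h := le_trans (le_max_right _ _) hTT
          rw [div_le_iff₀ hω] at h
          linarith
  obtain ⟨det, hdet⟩ : ∃ d : ℝ, d = B * B' * ε - A * A' * E := ⟨_, rfl⟩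
  have hdetlow : |A * A'| * E / 2 ≤ |det| := by
    have h1 : |A * A' * E| - |B * B' * ε| ≤ |det| := by
      rw [hdet, abs_sub_comm]
      exact abs_sub_abs_le_abs_sub _ _
    rw [abs_mul (A * A') E, abs_mul (B * B') ε, abs_of_pos hEpos, abs_of_pos hεpos] at h1
    have h2 : 2 * |B * B'| + |A * A'| ≤ |A * A'| * E := by
      have h3 := mul_le_mul_of_nonneg_left hEbig (le_of_lt hAA)
      have h4 : |A * A'| * (2 * |B * B'| / |A * A'|) = 2 * |B * B'| := by
        field_simp
      nlinarith
    nlinarith [abs_nonneg (B * B')]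
  have hdet0 : det ≠ 0 := by
    intro h
    rw [h, abs_zero] at hdetlow
    nlinarith
  obtain ⟨p, hp⟩ : ∃ p : ℝ, p = (B' * ε * c0 - A * cT) / det := ⟨_, rfl⟩
  obtain ⟨q, hq⟩ : ∃ q : ℝ, q = (B * cT - A' * E * c0) / det := ⟨_, rfl⟩
  have hpd : p * det = B' * ε * c0 - A * cT := by rw [hp]; exact div_mul_cancel₀ _ hdet0
  have hqd : q * det = B * cT - A' * E * c0 := by rw [hq]; exact div_mul_cancel₀ _ hdet0
  have hbc1 : B * p + A * q = c0 :=
    mul_right_cancel₀ hdet0 (by linear_combination B * hpd + A * hqd - c0 * hdet)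
  have hbc2 : A' * E * p + B' * ε * q = cT :=
    mul_right_cancel₀ hdet0 (by linear_combination (A' * E) * hpd + (B' * ε) * hqd - cT * hdet)
  have hX : (0:ℝ) ≤ |c0| + |cT| := by positivity
  -- bounds on p, q
  have hNp : |p| * E ≤ M * (|c0| + |cT|) := by
    have h1 : |p| * |det| ≤ (|A| + |B'|) * (|c0| + |cT|) := by
      rw [← abs_mul, hpd]
      calc |B' * ε * c0 - A * cT| ≤ |B' * ε * c0| + |A * cT| := abs_sub _ _
        _ ≤ (|A| + |B'|) * (|c0| + |cT|) := by
            rw [abs_mul (B' * ε) c0, abs_mul B' ε, abs_mul A cT, abs_of_pos hεpos]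
            nlinarith [abs_nonneg B', abs_nonneg A, abs_nonneg c0, abs_nonneg cT,
              mul_nonneg (abs_nonneg B') (abs_nonneg c0),
              mul_nonneg (abs_nonneg A) (abs_nonneg c0),
              mul_nonneg (abs_nonneg B') (abs_nonneg cT)]
    have h2 : |p| * (|A * A'| * E / 2) ≤ (|A| + |B'|) * (|c0| + |cT|) :=
      le_trans (mul_le_mul_of_nonneg_left hdetlow (abs_nonneg p)) h1
    have hMA : M * |A * A'| = 2 * (|A| + |B| + |A'| + |B'| + 1) := by
      rw [hM]; exact div_mul_cancel₀ _ (ne_of_gt hAA)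
    have hgoal : |p| * E * |A * A'| ≤ M * (|c0| + |cT|) * |A * A'| := by
      have h3 : M * (|c0| + |cT|) * |A * A'|
          = 2 * (|A| + |B| + |A'| + |B'| + 1) * (|c0| + |cT|) := by
        rw [mul_right_comm, hMA]
      rw [h3]
      nlinarith [h2, mul_nonneg (abs_nonneg B) hX, mul_nonneg (abs_nonneg A') hX, hX]
    exact le_of_mul_le_mul_right hgoal hAA
  have hNq : |q| ≤ M * (|c0| + |cT|) := by
    have h1 : |q| * |det| ≤ (|B| + |A'|) * E * (|c0| + |cT|) := by
      rw [← abs_mul, hqd]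
      calc |B * cT - A' * E * c0| ≤ |B * cT| + |A' * E * c0| := abs_sub _ _
        _ ≤ (|B| + |A'|) * E * (|c0| + |cT|) := by
            rw [abs_mul (A' * E) c0, abs_mul A' E, abs_mul B cT, abs_of_pos hEpos]
            nlinarith [abs_nonneg B, abs_nonneg A', abs_nonneg c0, abs_nonneg cT, hE1, hEpos,
              mul_nonneg (abs_nonneg B) (abs_nonneg cT),
              mul_nonneg (abs_nonneg A') (abs_nonneg c0),
              mul_nonneg (abs_nonneg B) (abs_nonneg c0),
              mul_nonneg (abs_nonneg A') (abs_nonneg cT),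
              mul_nonneg (mul_nonneg (abs_nonneg B) (abs_nonneg cT)) (le_trans zero_le_one hE1)]
    have h2 : |q| * (|A * A'| * E / 2) ≤ (|B| + |A'|) * E * (|c0| + |cT|) :=
      le_trans (mul_le_mul_of_nonneg_left hdetlow (abs_nonneg q)) h1
    have h2' : |q| * (|A * A'| / 2) ≤ (|B| + |A'|) * (|c0| + |cT|) := by
      nlinarith [hEpos, h2]
    have hMA : M * |A * A'| = 2 * (|A| + |B| + |A'| + |B'| + 1) := by
      rw [hM]; exact div_mul_cancel₀ _ (ne_of_gt hAA)
    have hgoal : |q| * |A * A'| ≤ M * (|c0| + |cT|) * |A * A'| := by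
      have h3 : M * (|c0| + |cT|) * |A * A'|
          = 2 * (|A| + |B| + |A'| + |B'| + 1) * (|c0| + |cT|) := by
        rw [mul_right_comm, hMA]
      rw [h3]
      nlinarith [h2', mul_nonneg (abs_nonneg B) hX, mul_nonneg (abs_nonneg A') hX,
        mul_nonneg (abs_nonneg A) hX, mul_nonneg (abs_nonneg B') hX, hX]
    exact le_of_mul_le_mul_right hgoal hAA
  -- the explicit solution
  set Y : ℝ → ℝ := fun t => p * Real.exp (ω * t) + q * Real.exp (-(ω * t)) with hYdef
  have hYd : ∀ t, HasDerivAt Y (ω * p * Real.exp (ω * t) - ω * q * Real.exp (-(ω * t))) t := by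
    intro t; rw [hYdef]; exact solD ω p q t
  have hY1 : Differentiable ℝ Y := fun t => (hYd t).differentiableAt
  have hYderiv : deriv Y = fun t => ω * p * Real.exp (ω * t) - ω * q * Real.exp (-(ω * t)) :=
    funext fun t => (hYd t).deriv
  have hDd : ∀ t, HasDerivAt (deriv Y) (ω ^ 2 * Y t) t := by
    intro t
    rw [hYderiv]
    have h' : HasDerivAt (fun s => ω * p * Real.exp (ω * s) - ω * q * Real.exp (-(ω * s)))
        (ω * (ω * p) * Real.exp (ω * t) - ω * (-(ω * q)) * Real.exp (-(ω * t))) t := by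
      have h2 := solD ω (ω * p) (-(ω * q)) t
      have heq : (fun s => ω * p * Real.exp (ω * s) + -(ω * q) * Real.exp (-(ω * s)))
          = fun s => ω * p * Real.exp (ω * s) - ω * q * Real.exp (-(ω * s)) := by
        funext s; ring
      rw [heq] at h2
      exact h2
    convert h' using 1
    rw [hYdef]
    ring
  have hY2 : Differentiable ℝ (deriv Y) := fun t => (hDd t).differentiableAt
  have hODE : ∀ t, deriv (deriv Y) t = ω ^ 2 * Y t := fun t => (hDd t).deriv
  have hbcY0 : a0 * Y 0 + b0 * deriv Y 0 = c0 := by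
    rw [hYderiv, hYdef]
    simp only [mul_zero, neg_zero, Real.exp_zero, mul_one]
    linear_combination hbc1 - p * hB - q * hA
  have hbcYT : aT * Y T + bT * deriv Y T = cT := by
    rw [hYderiv, hYdef]
    simp only
    rw [← hE, ← hε]
    linear_combination hbc2 - (p * E) * hA' - (q * ε) * hB'
  -- coordinates of an arbitrary solution
  have coords : ∀ y : ℝ → ℝ,
      Differentiable ℝ y → Differentiable ℝ (deriv y) →
      (∀ t : ℝ, deriv (deriv y) t = ω ^ 2 * y t) →
      a0 * y 0 + b0 * deriv y 0 = c0 →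
      aT * y T + bT * deriv y T = cT →
      ∀ t, y t = p * Real.exp (ω * t) + q * Real.exp (-(ω * t)) ∧
        deriv y t = ω * p * Real.exp (ω * t) - ω * q * Real.exp (-(ω * t)) := by
    intro y hy1 hy2 hode hbcy0 hbcyT
    have hrep := rep ω (ne_of_gt hω) y hy1 hy2 hode
    obtain ⟨P, hP⟩ : ∃ P : ℝ, P = (deriv y 0 + ω * y 0) / (2 * ω) := ⟨_, rfl⟩
    obtain ⟨Q, hQ⟩ : ∃ Q : ℝ, Q = (ω * y 0 - deriv y 0) / (2 * ω) := ⟨_, rfl⟩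
    rw [← hP, ← hQ] at hrep
    have h00 := (hrep 0).1
    have h01 := (hrep 0).2
    simp only [mul_zero, neg_zero, Real.exp_zero, mul_one] at h00 h01
    have hT0 := (hrep T).1
    have hT1' := (hrep T).2
    rw [← hE, ← hε] at hT0 hT1'
    have e1 : B * P + A * Q = c0 := by
      rw [h00, h01] at hbcy0
      linear_combination hbcy0 + P * hB + Q * hA
    have e2 : A' * E * P + B' * ε * Q = cT := by
      rw [hT0, hT1'] at hbcyT
      linear_combination hbcyT + (P * E) * hA' + (Q * ε) * hB'
    have hPp : P = p :=
      mul_right_cancel₀ hdet0 (by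
        rw [hpd]
        linear_combination (B' * ε) * e1 - A * e2 + P * hdet)
    have hQq : Q = q :=
      mul_right_cancel₀ hdet0 (by
        rw [hqd]
        linear_combination B * e2 - (A' * E) * e1 + Q * hdet)
    intro t
    exact ⟨by rw [(hrep t).1, hPp, hQq], by rw [(hrep t).2, hPp, hQq]⟩
  constructor
  · refine ⟨Y, ⟨hY1, hY2, hODE, hbcY0, hbcYT⟩, ?_⟩
    rintro z ⟨hz1, hz2, hz3, hz4, hz5⟩
    funext t
    rw [(coords z hz1 hz2 hz3 hz4 hz5 t).1, hYdef]
  · intro y hy1 hy2 hode hbcy0 hbcyT t ht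
    obtain ⟨hyt, hyt'⟩ := coords y hy1 hy2 hode hbcy0 hbcyT t
    have hsplit : Real.exp (ω * t) = E * Real.exp (-(ω * (T - t))) := by
      rw [hE, ← Real.exp_add]
      congr 1
      ring
    have f1 : |y t| ≤ |p| * Real.exp (ω * t) + |q| * Real.exp (-(ω * t)) := by
      rw [hyt]; exact absBound ω t p q
    have f2 : |deriv y t| ≤ ω * |p| * Real.exp (ω * t) + ω * |q| * Real.exp (-(ω * t)) := by
      rw [hyt', sub_eq_add_neg, ← neg_mul]
      calc |ω * p * Real.exp (ω * t) + -(ω * q) * Real.exp (-(ω * t))|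
          ≤ |ω * p| * Real.exp (ω * t) + |-(ω * q)| * Real.exp (-(ω * t)) := absBound ω t _ _
        _ = ω * |p| * Real.exp (ω * t) + ω * |q| * Real.exp (-(ω * t)) := by
            rw [abs_neg, abs_mul, abs_mul, abs_of_pos hω]
    have hv : (0:ℝ) < Real.exp (-(ω * (T - t))) := Real.exp_pos _
    have hu : (0:ℝ) < Real.exp (-(ω * t)) := Real.exp_pos _
    have key : |p| * Real.exp (ω * t) ≤ M * (|c0| + |cT|) * Real.exp (-(ω * (T - t))) := by
      calc |p| * Real.exp (ω * t) = (|p| * E) * Real.exp (-(ω * (T - t))) := by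
            rw [hsplit]; ring
        _ ≤ M * (|c0| + |cT|) * Real.exp (-(ω * (T - t))) :=
            mul_le_mul_of_nonneg_right hNp hv.le
    have key2 : |q| * Real.exp (-(ω * t)) ≤ M * (|c0| + |cT|) * Real.exp (-(ω * t)) :=
      mul_le_mul_of_nonneg_right hNq hu.le
    have hkey3 := mul_le_mul_of_nonneg_left key hω.le
    have hkey4 := mul_le_mul_of_nonneg_left key2 hω.le
    calc |y t| + |deriv y t|
        ≤ (|p| * Real.exp (ω * t) + |q| * Real.exp (-(ω * t)))
          + (ω * |p| * Real.exp (ω * t) + ω * |q| * Real.exp (-(ω * t))) := add_le_add f1 f2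
      _ ≤ (M * (|c0| + |cT|) * Real.exp (-(ω * (T - t)))
            + M * (|c0| + |cT|) * Real.exp (-(ω * t)))
          + (ω * (M * (|c0| + |cT|) * Real.exp (-(ω * (T - t))))
            + ω * (M * (|c0| + |cT|) * Real.exp (-(ω * t)))) := by
          have h3 : ω * |p| * Real.exp (ω * t) = ω * (|p| * Real.exp (ω * t)) := by ring
          have h4 : ω * |q| * Real.exp (-(ω * t)) = ω * (|q| * Real.exp (-(ω * t))) := by ring
          rw [h3, h4]
          linarith
      _ = (1 + ω) * M * (|c0| + |cT|) * (Real.exp (-(ω * t)) + Real.exp (-(ω * (T - t)))) := by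
          ring
end

section
/- Let A be a real N×N matrix, let S and U be complementary subspaces of ℝ^N each invariant under A and hence under exp(t·A) for every real t, and suppose there exist c > 0 and μ0 > 0 such that for all t ≥ 0: ‖exp(t·A)·v‖ ≤ c·e^{−μ0·t}·‖v‖ for every v ∈ S, and ‖exp(−t·A)·v‖ ≤ c·e^{−μ0·t}·‖v‖ for every v ∈ U. Let C0 and C1 be real N×N matrices such that the linear map from S × U to ℝ^N sending (a,b) to C0·a + C1·b is bijective. Then there exist T0 > 0 and K > 0 such that for every T ≥ T0, the linear map B_T from S × U to ℝ^N defined by B_T(a,b) = C0·(a + exp(−T·A)·b) + C1·(exp(T·A)·a + b) is bijective, and every (a,b) ∈ S × U satisfies ‖a‖ + ‖b‖ ≤ K·‖B_T(a,b)‖. -/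
open Real Matrix

/-- The Euclidean norm on `ℝ^N`. -/
noncomputable def euclNorm {N : ℕ} (v : Fin N → ℝ) : ℝ :=
  ‖(WithLp.equiv 2 (Fin N → ℝ)).symm v‖

namespace Stmt17Aux

noncomputable def EE (n : ℕ) : (Fin n → ℝ) ≃ₗ[ℝ] EuclideanSpace ℝ (Fin n) :=
  (WithLp.linearEquiv 2 ℝ (Fin n → ℝ)).symm

lemma euclNorm_eq {n : ℕ} (v : Fin n → ℝ) : euclNorm v = ‖EE n v‖ := rfl

lemma euclNorm_nonneg {n : ℕ} (v : Fin n → ℝ) : 0 ≤ euclNorm v := norm_nonneg _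

lemma eq_zero_of_euclNorm {n : ℕ} {v : Fin n → ℝ} (h : euclNorm v = 0) : v = 0 := by
  rw [euclNorm_eq, norm_eq_zero] at h
  have := congrArg (EE n).symm h
  simpa using this

lemma euclNorm_zero {n : ℕ} : euclNorm (0 : Fin n → ℝ) = 0 := by
  rw [euclNorm_eq, map_zero, norm_zero]

lemma euclNorm_add_le {n : ℕ} (x y : Fin n → ℝ) :
    euclNorm (x + y) ≤ euclNorm x + euclNorm y := by
  rw [euclNorm_eq, euclNorm_eq, euclNorm_eq, map_add]; exact norm_add_le _ _

lemma euclNorm_sub_le {n : ℕ} (x y : Fin n → ℝ) :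
    euclNorm (x - y) ≤ euclNorm x + euclNorm y := by
  rw [euclNorm_eq, euclNorm_eq, euclNorm_eq, map_sub]; exact norm_sub_le _ _

lemma exists_bound {n m : ℕ} (f : (Fin n → ℝ) →ₗ[ℝ] (Fin m → ℝ)) :
    ∃ C, 0 ≤ C ∧ ∀ v, euclNorm (f v) ≤ C * euclNorm v := by
  let g := LinearMap.toContinuousLinearMap
    ((EE m).toLinearMap.comp (f.comp (EE n).symm.toLinearMap))
  refine ⟨‖g‖, norm_nonneg _, fun v => ?_⟩
  have h := g.le_opNorm (EE n v)
  simpa [euclNorm_eq, g, LinearMap.coe_toContinuousLinearMap'] using h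

noncomputable def bmap {N : ℕ} (S U : Submodule ℝ (Fin N → ℝ))
    (M0 M1 : Matrix (Fin N) (Fin N) ℝ) : (S × U) →ₗ[ℝ] (Fin N → ℝ) where
  toFun p := M0.mulVec (p.1 : Fin N → ℝ) + M1.mulVec (p.2 : Fin N → ℝ)
  map_add' p q := by
    simp only [Prod.fst_add, Prod.snd_add, Submodule.coe_add, Matrix.mulVec_add]
    abel
  map_smul' r p := by
    simp only [Prod.smul_fst, Prod.smul_snd, Submodule.coe_smul, Matrix.mulVec_smul,
      RingHom.id_apply, smul_add]

end Stmt17Aux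

open Stmt17Aux

/-- uniform invertibility of the boundary map.  Under the hyperbolic
splitting and admissibility hypotheses, for every large `T` the map
`B_T(a,b) = C0·(a + exp(−TA)·b) + C1·(exp(TA)·a + b)` from `S × U` to `ℝ^N` is bijective,
with `‖a‖ + ‖b‖ ≤ K·‖B_T(a,b)‖` uniformly in `T`. -/
theorem stmt17 (N : ℕ) (A : Matrix (Fin N) (Fin N) ℝ)
    (S U : Submodule ℝ (Fin N → ℝ)) (hSU : IsCompl S U)
    (hSinv : ∀ v ∈ S, A.mulVec v ∈ S) (hUinv : ∀ v ∈ U, A.mulVec v ∈ U)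
    (c μ0 : ℝ) (hc : 0 < c) (hμ0 : 0 < μ0)
    (hSdec : ∀ t ≥ (0:ℝ), ∀ v ∈ S,
      euclNorm ((NormedSpace.exp (t • A)).mulVec v) ≤ c * Real.exp (-μ0 * t) * euclNorm v)
    (hUdec : ∀ t ≥ (0:ℝ), ∀ v ∈ U,
      euclNorm ((NormedSpace.exp (-t • A)).mulVec v) ≤ c * Real.exp (-μ0 * t) * euclNorm v)
    (C0 C1 : Matrix (Fin N) (Fin N) ℝ)
    (hadm : Function.Bijective
      (fun p : S × U => C0.mulVec (p.1 : Fin N → ℝ) + C1.mulVec (p.2 : Fin N → ℝ))) :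
    ∃ T0 > (0:ℝ), ∃ K > (0:ℝ), ∀ T ≥ T0,
      Function.Bijective
        (fun p : S × U =>
          C0.mulVec ((p.1 : Fin N → ℝ) + (NormedSpace.exp (-T • A)).mulVec (p.2 : Fin N → ℝ))
          + C1.mulVec ((NormedSpace.exp (T • A)).mulVec (p.1 : Fin N → ℝ) + (p.2 : Fin N → ℝ))) ∧
      ∀ p : S × U,
        euclNorm (p.1 : Fin N → ℝ) + euclNorm (p.2 : Fin N → ℝ)
          ≤ K * euclNorm
              (C0.mulVec ((p.1 : Fin N → ℝ) + (NormedSpace.exp (-T • A)).mulVec (p.2 : Fin N → ℝ))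
               + C1.mulVec ((NormedSpace.exp (T • A)).mulVec (p.1 : Fin N → ℝ) + (p.2 : Fin N → ℝ))) := by
  classical
  have hadm' : Function.Bijective ⇑(bmap S U C0 C1) := hadm
  let e0 := LinearEquiv.ofBijective (bmap S U C0 C1) hadm'
  obtain ⟨Ca, hCa0, hCa⟩ := Stmt17Aux.exists_bound
    (S.subtype.comp ((LinearMap.fst ℝ S U).comp e0.symm.toLinearMap))
  obtain ⟨Cb, hCb0, hCb⟩ := Stmt17Aux.exists_bound
    (U.subtype.comp ((LinearMap.snd ℝ S U).comp e0.symm.toLinearMap))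
  set K0 : ℝ := max (Ca + Cb) 1 with hK0def
  have hK0pos : (0:ℝ) < K0 := lt_of_lt_of_le one_pos (le_max_right _ _)
  have key0 : ∀ p : S × U, euclNorm (p.1 : Fin N → ℝ) + euclNorm (p.2 : Fin N → ℝ)
      ≤ K0 * euclNorm (C0.mulVec (p.1 : Fin N → ℝ) + C1.mulVec (p.2 : Fin N → ℝ)) := by
    intro p
    have hsymm : e0.symm (C0.mulVec (p.1 : Fin N → ℝ) + C1.mulVec (p.2 : Fin N → ℝ)) = p := by
      have : e0 p = C0.mulVec (p.1 : Fin N → ℝ) + C1.mulVec (p.2 : Fin N → ℝ) := rfl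
      rw [← this]; exact e0.symm_apply_apply p
    have h1 : euclNorm ((p.1 : Fin N → ℝ))
        ≤ Ca * euclNorm (C0.mulVec (p.1 : Fin N → ℝ) + C1.mulVec (p.2 : Fin N → ℝ)) := by
      have h := hCa (C0.mulVec (p.1 : Fin N → ℝ) + C1.mulVec (p.2 : Fin N → ℝ))
      simpa [hsymm] using h
    have h2 : euclNorm ((p.2 : Fin N → ℝ))
        ≤ Cb * euclNorm (C0.mulVec (p.1 : Fin N → ℝ) + C1.mulVec (p.2 : Fin N → ℝ)) := by
      have h := hCb (C0.mulVec (p.1 : Fin N → ℝ) + C1.mulVec (p.2 : Fin N → ℝ))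
      simpa [hsymm] using h
    have hw0 := euclNorm_nonneg (C0.mulVec (p.1 : Fin N → ℝ) + C1.mulVec (p.2 : Fin N → ℝ))
    have hle : Ca + Cb ≤ K0 := le_max_left _ _
    nlinarith [h1, h2]
  obtain ⟨M0, hM00, hM0⟩ := Stmt17Aux.exists_bound (Matrix.mulVecLin C0)
  obtain ⟨M1, hM10, hM1⟩ := Stmt17Aux.exists_bound (Matrix.mulVecLin C1)
  have hXpos : (0:ℝ) < 2 * K0 * (c * (M0 + M1) + 1) := by positivity
  refine ⟨max 1 (Real.log (2 * K0 * (c * (M0 + M1) + 1)) / μ0),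
    lt_of_lt_of_le one_pos (le_max_left _ _), 2 * K0, by linarith, ?_⟩
  intro T hT
  have hT0 : (0:ℝ) ≤ T :=
    le_trans (le_trans zero_le_one (le_max_left _ _)) hT
  have hexp : Real.exp (-μ0 * T) * (2 * K0 * (c * (M0 + M1) + 1)) ≤ 1 := by
    have h1 : Real.log (2 * K0 * (c * (M0 + M1) + 1)) / μ0 ≤ T := le_trans (le_max_right _ _) hT
    have h2 : Real.log (2 * K0 * (c * (M0 + M1) + 1)) ≤ T * μ0 := (div_le_iff₀ hμ0).mp h1
    have h3 : Real.exp (-μ0 * T) ≤ Real.exp (-Real.log (2 * K0 * (c * (M0 + M1) + 1))) :=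
      Real.exp_le_exp.mpr (by linarith)
    have h4 : Real.exp (-Real.log (2 * K0 * (c * (M0 + M1) + 1)))
        = (2 * K0 * (c * (M0 + M1) + 1))⁻¹ := by
      rw [Real.exp_neg, Real.exp_log hXpos]
    calc Real.exp (-μ0 * T) * (2 * K0 * (c * (M0 + M1) + 1))
        ≤ (2 * K0 * (c * (M0 + M1) + 1))⁻¹ * (2 * K0 * (c * (M0 + M1) + 1)) := by
          apply mul_le_mul_of_nonneg_right _ hXpos.le
          rw [← h4]; exact h3
      _ = 1 := inv_mul_cancel₀ hXpos.ne'
  set Ep := NormedSpace.exp (T • A) with hEp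
  set Em := NormedSpace.exp (-T • A) with hEm
  -- the main uniform bound
  have hbound : ∀ (a b : Fin N → ℝ), a ∈ S → b ∈ U →
      euclNorm a + euclNorm b
        ≤ 2 * K0 * euclNorm (C0.mulVec (a + Em.mulVec b) + C1.mulVec (Ep.mulVec a + b)) := by
    intro a b ha hb
    have hk : euclNorm a + euclNorm b
        ≤ K0 * euclNorm (C0.mulVec a + C1.mulVec b) := by
      simpa using key0 ⟨⟨a, ha⟩, ⟨b, hb⟩⟩
    have hsplit : C0.mulVec (a + Em.mulVec b) + C1.mulVec (Ep.mulVec a + b)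
        = (C0.mulVec a + C1.mulVec b) + (C0.mulVec (Em.mulVec b) + C1.mulVec (Ep.mulVec a)) := by
      rw [Matrix.mulVec_add, Matrix.mulVec_add]; abel
    have hwle : euclNorm (C0.mulVec a + C1.mulVec b)
        ≤ euclNorm (C0.mulVec (a + Em.mulVec b) + C1.mulVec (Ep.mulVec a + b))
          + euclNorm (C0.mulVec (Em.mulVec b) + C1.mulVec (Ep.mulVec a)) := by
      have heq : C0.mulVec a + C1.mulVec b
          = (C0.mulVec (a + Em.mulVec b) + C1.mulVec (Ep.mulVec a + b))
            - (C0.mulVec (Em.mulVec b) + C1.mulVec (Ep.mulVec a)) := by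
        rw [hsplit]; abel
      rw [heq]; exact euclNorm_sub_le _ _
    have hpa : euclNorm (Ep.mulVec a) ≤ c * Real.exp (-μ0 * T) * euclNorm a :=
      hSdec T hT0 a ha
    have hpb : euclNorm (Em.mulVec b) ≤ c * Real.exp (-μ0 * T) * euclNorm b :=
      hUdec T hT0 b hb
    have h1 : euclNorm (C0.mulVec (Em.mulVec b)) ≤ M0 * (c * Real.exp (-μ0 * T) * euclNorm b) :=
      le_trans (by simpa using hM0 (Em.mulVec b)) (mul_le_mul_of_nonneg_left hpb hM00)
    have h2 : euclNorm (C1.mulVec (Ep.mulVec a)) ≤ M1 * (c * Real.exp (-μ0 * T) * euclNorm a) :=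
      le_trans (by simpa using hM1 (Ep.mulVec a)) (mul_le_mul_of_nonneg_left hpa hM10)
    have htri := euclNorm_add_le (C0.mulVec (Em.mulVec b)) (C1.mulVec (Ep.mulVec a))
    have hpertle : euclNorm (C0.mulVec (Em.mulVec b) + C1.mulVec (Ep.mulVec a))
        ≤ c * (M0 + M1) * Real.exp (-μ0 * T) * (euclNorm a + euclNorm b) := by
      have hna := euclNorm_nonneg a
      have hnb := euclNorm_nonneg b
      have he0 := Real.exp_nonneg (-μ0 * T)
      nlinarith [mul_nonneg hM00 (mul_nonneg he0 hna), mul_nonneg hM10 (mul_nonneg he0 hnb),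
        mul_nonneg hc.le (mul_nonneg hM00 (mul_nonneg he0 hna)),
        mul_nonneg hc.le (mul_nonneg hM10 (mul_nonneg he0 hnb))]
    -- combine
    have hn := add_nonneg (euclNorm_nonneg a) (euclNorm_nonneg b)
    have hwT0 := euclNorm_nonneg (C0.mulVec (a + Em.mulVec b) + C1.mulVec (Ep.mulVec a + b))
    have hKw := mul_le_mul_of_nonneg_left hwle hK0pos.le
    have hKp := mul_le_mul_of_nonneg_left hpertle hK0pos.le
    have hXn := mul_le_mul_of_nonneg_right hexp hn
    nlinarith [mul_nonneg (mul_nonneg hK0pos.le (Real.exp_nonneg (-μ0 * T))) hn]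
  refine ⟨?_, fun p => hbound (p.1 : Fin N → ℝ) (p.2 : Fin N → ℝ) p.1.2 p.2.2⟩
  -- bijectivity
  let ψ := bmap S U (C0 + C1 * Ep) (C0 * Em + C1)
  have hfun : ∀ p : S × U,
      C0.mulVec ((p.1 : Fin N → ℝ) + Em.mulVec (p.2 : Fin N → ℝ))
        + C1.mulVec (Ep.mulVec (p.1 : Fin N → ℝ) + (p.2 : Fin N → ℝ)) = ψ p := by
    intro p
    show _ = (C0 + C1 * Ep).mulVec (p.1 : Fin N → ℝ) + (C0 * Em + C1).mulVec (p.2 : Fin N → ℝ)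
    simp only [Matrix.add_mulVec, Matrix.mulVec_add, ← Matrix.mulVec_mulVec]
    abel
  have hfun' : (fun p : S × U =>
      C0.mulVec ((p.1 : Fin N → ℝ) + Em.mulVec (p.2 : Fin N → ℝ))
        + C1.mulVec (Ep.mulVec (p.1 : Fin N → ℝ) + (p.2 : Fin N → ℝ))) = ⇑ψ :=
    funext hfun
  rw [hfun']
  have hinj : Function.Injective ⇑ψ := by
    intro p q hpq
    have h0 : ψ (p - q) = 0 := by rw [map_sub, hpq, sub_self]
    have hb2 := hbound ((p - q).1 : Fin N → ℝ) ((p - q).2 : Fin N → ℝ) (p - q).1.2 (p - q).2.2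
    rw [hfun (p - q), h0, euclNorm_zero, mul_zero] at hb2
    have hna := euclNorm_nonneg ((p - q).1 : Fin N → ℝ)
    have hnb := euclNorm_nonneg ((p - q).2 : Fin N → ℝ)
    have e1 : ((p - q).1 : Fin N → ℝ) = 0 := eq_zero_of_euclNorm (by linarith)
    have e2 : ((p - q).2 : Fin N → ℝ) = 0 := eq_zero_of_euclNorm (by linarith)
    have e1' : (p - q).1 = 0 := Subtype.ext e1
    have e2' : (p - q).2 = 0 := Subtype.ext e2
    have : p - q = 0 := Prod.ext e1' e2'
    exact sub_eq_zero.mp this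
  have hendoinj : Function.Injective ⇑(ψ.comp e0.symm.toLinearMap) := by
    rw [LinearMap.coe_comp]
    exact hinj.comp (by simpa using e0.symm.injective)
  have hendosurj : Function.Surjective ⇑(ψ.comp e0.symm.toLinearMap) :=
    LinearMap.injective_iff_surjective.mp hendoinj
  have hsurj : Function.Surjective ⇑ψ := by
    intro w
    obtain ⟨v, hv⟩ := hendosurj w
    exact ⟨e0.symm v, hv⟩
  exact ⟨hinj, hsurj⟩
end

section
/- Let A be a real n×n matrix, B a real n×m matrix, Q a symmetric positive semidefinite real n×n matrix, and R a symmetric positive definite real m×m matrix. Assume the two Hautus-type conditions on the imaginary axis: (i) for every real ω and every x ∈ ℂ^n, if A·x = iω·x and Q·x = 0 then x = 0; (ii) for every real ω and every p ∈ ℂ^n, if Aᵀ·p = iω·p and Bᵀ·p = 0 then p = 0 (matrices acting on complex vectors by coefficient extension). Then the Hamiltonian matrix H, the real (2n)×(2n) block matrix with blocks A and −B·R^{-1}·Bᵀ in the first row and −Q and −Aᵀ in the second row, has no purely imaginary eigenvalue: for every real ω, iω is not an eigenvalue of the complexification of H. -/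
open Matrix Complex
open scoped ComplexOrder

lemma mapC_mul {k l o : Type*} [Fintype l] (P : Matrix k l ℝ) (N : Matrix l o ℝ) :
    (P * N).map Complex.ofReal = P.map Complex.ofReal * N.map Complex.ofReal := by
  ext i j
  simp [Matrix.mul_apply, Matrix.map_apply]

lemma mapC_conjTranspose {k l : Type*} (M : Matrix k l ℝ) :
    (M.map Complex.ofReal)ᴴ = Mᵀ.map Complex.ofReal := by
  ext i j
  simp [Matrix.conjTranspose_apply, Complex.conj_ofReal]

lemma mapC_neg {k l : Type*} (M : Matrix k l ℝ) :
    (-M).map Complex.ofReal = -(M.map Complex.ofReal) := by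
  ext i j; simp

lemma psd_mapC {k : Type*} [Fintype k] [DecidableEq k] {S : Matrix k k ℝ}
    (hS : S.PosSemidef) : (S.map Complex.ofReal).PosSemidef := by
  open scoped MatrixOrder Matrix.Norms.L2Operator in
  obtain ⟨L, rfl⟩ :=
    CStarAlgebra.nonneg_iff_eq_star_mul_self.mp (Matrix.nonneg_iff_posSemidef.mpr hS)
  rw [star_eq_conjTranspose, mapC_mul]
  have hL : (Lᴴ : Matrix k k ℝ).map Complex.ofReal = (L.map Complex.ofReal)ᴴ := by
    rw [mapC_conjTranspose]
    rfl
  rw [hL]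
  exact Matrix.posSemidef_conjTranspose_mul_self _


/-- hyperbolicity of the Hamiltonian matrix of the regular LQ problem.
Under the Hautus-type conditions on the imaginary axis — (i) no purely imaginary
eigenvector of `A` is killed by `Q`, (ii) no purely imaginary eigenvector of `Aᵀ` is
killed by `Bᵀ` — the Hamiltonian matrix `H = [[A, −B·R⁻¹·Bᵀ], [−Q, −Aᵀ]]` has no purely
imaginary eigenvalue. -/
theorem stmt18 (n m : ℕ)
    (A : Matrix (Fin n) (Fin n) ℝ) (B : Matrix (Fin n) (Fin m) ℝ)
    (Q : Matrix (Fin n) (Fin n) ℝ) (hQ : Q.PosSemidef)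
    (R : Matrix (Fin m) (Fin m) ℝ) (hR : R.PosDef)
    (hdet : ∀ (ω : ℝ) (x : Fin n → ℂ),
      (A.map Complex.ofReal).mulVec x = (Complex.I * ω) • x →
      (Q.map Complex.ofReal).mulVec x = 0 → x = 0)
    (hcont : ∀ (ω : ℝ) (p : Fin n → ℂ),
      (Aᵀ.map Complex.ofReal).mulVec p = (Complex.I * ω) • p →
      (Bᵀ.map Complex.ofReal).mulVec p = 0 → p = 0) :
    ∀ ω : ℝ,
      ¬ ∃ v : (Fin n ⊕ Fin n) → ℂ, v ≠ 0 ∧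
        ((Matrix.fromBlocks A (-(B * R⁻¹ * Bᵀ)) (-Q) (-Aᵀ)).map Complex.ofReal).mulVec v
          = (Complex.I * ω) • v := by
  rintro ω ⟨v, hv0, heq⟩
  set c : ℂ := Complex.I * ω with hc
  set Ac := A.map Complex.ofReal with hAc
  set Qc := Q.map Complex.ofReal with hQcdef
  set Bc := B.map Complex.ofReal with hBc
  set Nc := (R⁻¹).map Complex.ofReal with hNc
  set Tc := Aᵀ.map Complex.ofReal with hTc
  set BTc := Bᵀ.map Complex.ofReal with hBTc
  set Mc := (B * R⁻¹ * Bᵀ).map Complex.ofReal with hMc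
  set x : Fin n → ℂ := v ∘ Sum.inl with hx
  set p : Fin n → ℂ := v ∘ Sum.inr with hp
  have hv : v = Sum.elim x p := by funext i; cases i <;> rfl
  rw [hv, Matrix.fromBlocks_map, Matrix.fromBlocks_mulVec] at heq
  have E1 : Ac *ᵥ x - Mc *ᵥ p = c • x := by
    funext i
    have := congrFun heq (Sum.inl i)
    simpa [mapC_neg, Matrix.neg_mulVec, sub_eq_add_neg] using this
  have E2 : -(Qc *ᵥ x) - Tc *ᵥ p = c • p := by
    funext i
    have := congrFun heq (Sum.inr i)
    simpa [mapC_neg, Matrix.neg_mulVec, sub_eq_add_neg] using this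
  set a : ℂ := star p ⬝ᵥ (Ac *ᵥ x) with ha
  set α : ℂ := star x ⬝ᵥ (Qc *ᵥ x) with hα
  set β : ℂ := star p ⬝ᵥ (Mc *ᵥ p) with hβ
  set s : ℂ := star x ⬝ᵥ p with hs
  -- scalar identity from E1
  have ht : a - β = c * (star p ⬝ᵥ x) := by
    have := congrArg (fun w => star p ⬝ᵥ w) E1
    simpa [dotProduct_sub, dotProduct_smul, smul_eq_mul] using this
  -- scalar identity from E2
  have hu : -α - star x ⬝ᵥ (Tc *ᵥ p) = c * s := by
    have := congrArg (fun w => star x ⬝ᵥ w) E2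
    simpa [dotProduct_sub, dotProduct_neg, dotProduct_smul,
      smul_eq_mul] using this
  have hconj : star x ⬝ᵥ (Tc *ᵥ p) = star a := by
    rw [ha, Matrix.star_dotProduct]
    congr 1
    rw [Matrix.star_mulVec, hTc, mapC_conjTranspose, Matrix.transpose_transpose, ← hAc,
      ← Matrix.dotProduct_mulVec]
  have hstarc : star c = -c := by
    rw [hc]; simp [Complex.star_def]
  have hsps : star p ⬝ᵥ x = star s := by
    rw [hs, Matrix.star_dotProduct]
  have key : α + star β = 0 := by
    have ht' := congrArg star ht
    rw [star_sub, star_mul', hsps, star_star, hstarc] at ht'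
    rw [hconj] at hu
    have := congrArg₂ (· + ·) hu ht'
    linear_combination -this
  have hQcpsd : Qc.PosSemidef := psd_mapC hQ
  have hNcpsd : Nc.PosSemidef := psd_mapC hR.inv.posSemidef
  have hαnn : (0 : ℂ) ≤ α := hQcpsd.dotProduct_mulVec_nonneg x
  set q : Fin m → ℂ := BTc *ᵥ p with hq
  have hβq : β = star q ⬝ᵥ (Nc *ᵥ q) := by
    rw [hβ, hMc, mapC_mul, mapC_mul, ← hBc, ← hNc, ← hBTc, ← Matrix.mulVec_mulVec,
      ← Matrix.mulVec_mulVec, Matrix.dotProduct_mulVec, ← hq]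
    congr 1
    rw [hq, hBTc, Matrix.star_mulVec, mapC_conjTranspose, Matrix.transpose_transpose, ← hBc]
  have hβnn : (0 : ℂ) ≤ β := hβq ▸ hNcpsd.dotProduct_mulVec_nonneg q
  have hsβ : star β = β := by
    rw [Complex.star_def, Complex.conj_eq_iff_im]
    rw [Complex.le_def] at hβnn
    exact hβnn.2.symm
  rw [hsβ] at key
  obtain ⟨hα0, hβ0⟩ := (add_eq_zero_iff_of_nonneg hαnn hβnn).mp key
  have hQx : Qc *ᵥ x = 0 := (hQcpsd.dotProduct_mulVec_zero_iff x).mp hα0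
  have hNq : Nc *ᵥ q = 0 :=
    (hNcpsd.dotProduct_mulVec_zero_iff q).mp (by rw [← hβq]; exact hβ0)
  have hdetN : IsUnit Nc.det := by
    have h1 : Nc.det = ((R⁻¹.det : ℝ) : ℂ) := (RingHom.map_det Complex.ofRealHom R⁻¹).symm
    rw [h1]
    simp only [isUnit_iff_ne_zero, ne_eq, Complex.ofReal_eq_zero]
    exact ne_of_gt hR.inv.det_pos
  have hq0 : q = 0 := by
    have h1 : Nc⁻¹ *ᵥ (Nc *ᵥ q) = q := by
      rw [Matrix.mulVec_mulVec, Matrix.nonsing_inv_mul _ hdetN, Matrix.one_mulVec]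
    rw [← h1, hNq, Matrix.mulVec_zero]
  have hTp : Tc *ᵥ p = (Complex.I * ((-ω : ℝ) : ℂ)) • p := by
    have h2 := E2
    rw [hQx, neg_zero, zero_sub] at h2
    have : Tc *ᵥ p = (-c) • p := by rw [neg_smul, ← h2, neg_neg]
    rw [this]
    congr 1
    rw [hc]
    push_cast
    ring
  have hp0 : p = 0 := hcont (-ω) p hTp hq0
  have hAx : Ac *ᵥ x = c • x := by
    have h1 := E1
    rw [hp0, Matrix.mulVec_zero, sub_zero] at h1
    exact h1
  have hx0 : x = 0 := hdet ω x hAx hQx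
  apply hv0
  rw [hv, hx0, hp0]
  funext i
  cases i <;> rfl
end
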